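/- arXiv:1609.00961 — 3 statements merged into one kernel-verified Lean document; each statement's English description precedes it below -/
import Mathlib

section
/- Let d₁,…,d_s ≥ 0 be integers and let f(α₁,…,α_s) = Σ_{(x⃗₁,…,x⃗_s)∈𝐗⁽ˢ⁾} a(x⃗₁,…,x⃗_s) α₁(x⃗₁)⋯α_s(x⃗_s) have symmetric coefficient system a with ‖f‖_w < ∞, and suppose a(x⃗₁,…,x⃗_s) = 0 unless n(x⃗_i) ≥ d_i for every 1 ≤ i ≤ s (i.e. f is of degree at least d_i in the field α_i). Let p₁,…,p_s ∈ (0,∞] satisfy Σ_{j=1}^s d_j/p_j = 1. Then for all fields α₁,…,α_s with |α_j(x)| ≤ κ_j for all x ∈ X and 1 ≤ j ≤ s, one has |f(α₁,…,α_s)| ≤ ‖f‖_w · Π_{j=1}^s (κ_j^{-1}‖α_j‖_{p_j})^{d_j}, where ‖α‖_p = (Σ_{x∈X}|α(x)|^p)^{1/p} for p < ∞ and ‖α‖_∞ = max_{x∈X}|α(x)|. -/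
open scoped BigOperators ENNReal Classical

namespace BFKT

noncomputable section

variable {X : Type*}

/-- Tuples of points of `X` with prescribed multi-length `n`. -/
abbrev Tup (X : Type*) {s : ℕ} (n : Fin s → ℕ) := (j : Fin s) → Fin (n j) → X

/-- Pass from a tuple to the associated family of lists. -/
def toLists {s : ℕ} {n : Fin s → ℕ} (v : Tup X n) : Fin s → List X :=
  fun j => List.ofFn (v j)

/-- The set of points of `X` occurring in one of the lists. -/
def supp [DecidableEq X] {s : ℕ} (l : Fin s → List X) : Finset X :=
  Finset.univ.biUnion fun j => (l j).toFinset

/-- The weight system with tree-weight `G` and constant weight factors `κ`. -/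
def wt [DecidableEq X] (G : Finset X → ℝ) {s : ℕ} (κ : Fin s → ℝ) (l : Fin s → List X) : ℝ :=
  (∏ j, κ j ^ (l j).length) * G (supp l)

/-- A coefficient system is symmetric if it is invariant under permutation of the
components of each of its list arguments. -/
def IsSymm {s : ℕ} (a : (Fin s → List X) → ℂ) : Prop :=
  ∀ (l : Fin s → List X) (j : Fin s) (l' : List X),
    (l j).Perm l' → a (Function.update l j l') = a l

/-- The norm `‖f‖_w` of an analytic function with (symmetric) coefficient system `a`. -/
def coefNorm [Fintype X] [DecidableEq X] (G : Finset X → ℝ) {s : ℕ}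
    (κ : Fin s → ℝ) (a : (Fin s → List X) → ℂ) : ℝ≥0∞ :=
  ENNReal.ofReal (‖a fun _ => []‖) +
  ∑' n : Fin s → ℕ,
    if 1 ≤ ∑ j, n j then
      ⨆ (x : X) (j : Fin s) (_ : n j ≠ 0) (i : Fin (n j)),
        ∑ v : Tup X n,
          if v j i = x then
            ENNReal.ofReal (‖a (toLists v)‖ * wt G κ (toLists v))
          else 0
    else 0

/-- `A` is an `s`-field map kernel: it vanishes on the empty tuple. -/
def IsKernel {s : ℕ} (A : X → (Fin s → List X) → ℂ) : Prop :=
  ∀ x, A x (fun _ => []) = 0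

/-- The `L` part of the field map kernel norm. -/
def kerL [Fintype X] [DecidableEq X] (G : Finset X → ℝ) {s : ℕ} (κ : Fin s → ℝ)
    (A : X → (Fin s → List X) → ℂ) (n : Fin s → ℕ) : ℝ≥0∞ :=
  ⨆ x : X, ∑ v : Tup X n,
    ENNReal.ofReal (‖A x (toLists v)‖ * (∏ j, κ j ^ n j)
      * G (insert x (supp (toLists v))))

/-- The `R` part of the field map kernel norm. -/
def kerR [Fintype X] [DecidableEq X] (G : Finset X → ℝ) {s : ℕ} (κ : Fin s → ℝ)
    (A : X → (Fin s → List X) → ℂ) (n : Fin s → ℕ) : ℝ≥0∞ :=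
  ⨆ (x' : X) (j : Fin s) (_ : n j ≠ 0) (i : Fin (n j)),
    ∑ x : X, ∑ v : Tup X n,
      if v j i = x' then
        ENNReal.ofReal (‖A x (toLists v)‖ * (∏ j', κ j' ^ n j')
          * G (insert x (supp (toLists v))))
      else 0

/-- The norm `⦀A⦀_w` of an `s`-field map kernel. -/
def kerNorm [Fintype X] [DecidableEq X] (G : Finset X → ℝ) {s : ℕ} (κ : Fin s → ℝ)
    (A : X → (Fin s → List X) → ℂ) : ℝ≥0∞ :=
  ∑' n : Fin s → ℕ, if 1 ≤ ∑ j, n j then max (kerL G κ A n) (kerR G κ A n) else 0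

/-- The field obtained by applying the field map with kernel `A` to the fields `α`. -/
def fmApply [Fintype X] {s : ℕ} (A : X → (Fin s → List X) → ℂ)
    (α : Fin s → X → ℂ) (x : X) : ℂ :=
  ∑' p : Σ n : Fin s → ℕ, Tup X n, A x (toLists p.2) * ∏ j, ∏ i, α j (p.2 j i)

/-- The value of the analytic function with coefficient system `a` at the fields `α`. -/
def fnApply [Fintype X] {s : ℕ} (a : (Fin s → List X) → ℂ)
    (α : Fin s → X → ℂ) : ℂ :=
  ∑' p : Σ n : Fin s → ℕ, Tup X n, a (toLists p.2) * ∏ j, ∏ i, α j (p.2 j i)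

/-- The `L^p` norm (for `0 < p ≤ ∞`) of a field on the finite set `X`. -/
def lpNorm [Fintype X] (p : ℝ≥0∞) (α : X → ℂ) : ℝ :=
  if p = ∞ then ⨆ x, ‖α x‖
  else (∑ x, ‖α x‖ ^ p.toReal) ^ (1 / p.toReal)

/-- Symmetrization of a coefficient system. -/
def symmetrize {s : ℕ} (a : (Fin s → List X) → ℂ) : (Fin s → List X) → ℂ :=
  fun l =>
    (((∏ j, Nat.factorial (l j).length : ℕ) : ℂ))⁻¹ *
      ∑ e : (j : Fin s) → Equiv.Perm (Fin (l j).length),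
        a fun j => List.ofFn fun i => (l j).get (e j i)

/-- Ordered concatenation of the pieces `q (j,k)`, in lexicographic order of `(j,k)`. -/
def concatPieces {r : ℕ} (m : Fin r → ℕ) (q : (Σ j : Fin r, Fin (m j)) → List X) : List X :=
  ((List.finRange r).map fun j => (List.ofFn fun k : Fin (m j) => q ⟨j, k⟩).flatten).flatten

/-- The coefficient system obtained by formally substituting the field map kernels `A j`
into the coefficient system `a` of a function of `r` fields. -/
def substCoef [Fintype X] {r s : ℕ} (a : (Fin r → List X) → ℂ)
    (A : Fin r → X → (Fin s → List X) → ℂ) : (Fin s → List X) → ℂ :=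
  fun l =>
    ∑' m : Fin r → ℕ,
      ∑ y : Tup X m,
        a (toLists y) *
          ∑' q : (i : Fin s) → (Σ j : Fin r, Fin (m j)) → List X,
            if ∀ i, concatPieces m (q i) = l i then
              ∏ j, ∏ k, A j (y j k) (fun i => q i ⟨j, k⟩)
            else 0

/-- The kernel obtained by formally substituting the field map kernels `A j`
into the `r`-field map kernel `B`. -/
def substKer [Fintype X] {r s : ℕ} (B : X → (Fin r → List X) → ℂ)
    (A : Fin r → X → (Fin s → List X) → ℂ) : X → (Fin s → List X) → ℂ :=
  fun x l => substCoef (B x) A l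

/-- Total length of the last `r` list arguments of an `(s+r)`-field map kernel argument. -/
def lastLen {X : Type*} {s r : ℕ} (l : Fin (s + r) → List X) : ℕ :=
  ∑ j : Fin r, (l (Fin.natAdd s j)).length

/-- `B` has minimum degree at least `d` in its last `r` arguments. -/
def MinDeg {s r : ℕ} (B : X → (Fin (s + r) → List X) → ℂ) (d : ℕ) : Prop :=
  ∀ x l, lastLen (s := s) (r := r) l < d → B x l = 0

/-- `B` has maximum degree at most `d` in its last `r` arguments. -/
def MaxDeg {s r : ℕ} (B : X → (Fin (s + r) → List X) → ℂ) (d : ℕ) : Prop :=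
  ∀ x l, d < lastLen (s := s) (r := r) l → B x l = 0

/-- The restriction `B_{n_{s+1},…,n_{s+r}}`. -/
def restrictDeg {s r : ℕ} (B : X → (Fin (s + r) → List X) → ℂ) (n : Fin r → ℕ) :
    X → (Fin (s + r) → List X) → ℂ :=
  fun x l => if ∀ j, (l (Fin.natAdd s j)).length = n j then B x l else 0

/-- The primed norm `⦀B⦀'_{w_{κ,λ}}`. -/
def kerNorm' [Fintype X] [DecidableEq X] (G : Finset X → ℝ) {s r : ℕ}
    (kl : Fin (s + r) → ℝ) (B : X → (Fin (s + r) → List X) → ℂ) : ℝ≥0∞ :=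
  ∑' n : Fin r → ℕ, (∑ j, n j : ℕ) * kerNorm G kl (restrictDeg B n)

/-- The norm of an `r`-tuple of `s`-field maps, as element of the Banach space `𝓑`. -/
def tupleNorm [Fintype X] [DecidableEq X] (G : Finset X → ℝ) {s r : ℕ}
    (κ : Fin s → ℝ) (lam : Fin r → ℝ)
    (Γ : Fin r → X → (Fin s → List X) → ℂ) : ℝ≥0∞ :=
  ⨆ j, kerNorm G κ (Γ j) / ENNReal.ofReal (lam j)

/-- The kernel of the coordinate field map `(α₁,…,α_s) ↦ α_i`. -/
def projKer [DecidableEq X] {s : ℕ} (i : Fin s) : X → (Fin s → List X) → ℂ :=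
  fun x l => if l = Function.update (fun _ => ([] : List X)) i [x] then 1 else 0

/-- The family of maps substituted into an `(s+r)`-field map when composing with
an `r`-tuple `Γ` of `s`-field maps: the first `s` arguments are left alone. -/
def extendMaps [DecidableEq X] {s r : ℕ}
    (Γ : Fin r → X → (Fin s → List X) → ℂ) :
    Fin (s + r) → X → (Fin s → List X) → ℂ :=
  Fin.addCases (fun i => projKer i) Γ

/-- The kernel of the `s`-field map `B̃(Γ⃗)(α⃗) = B(α⃗, Γ⃗(α⃗))`. -/
def tildeKer [Fintype X] [DecidableEq X] {s r : ℕ}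
    (B : X → (Fin (s + r) → List X) → ℂ)
    (Γ : Fin r → X → (Fin s → List X) → ℂ) : X → (Fin s → List X) → ℂ :=
  substKer B (extendMaps Γ)

end


noncomputable section AuxProof

lemma aux_prod_rpow_sum {ι : Type*} (s : Finset ι) (c : ℝ≥0∞) (σ : ι → ℝ)
    (hσ : ∀ t ∈ s, 0 ≤ σ t) : ∏ t ∈ s, c ^ σ t = c ^ (∑ t ∈ s, σ t) := by
  classical
  induction s using Finset.induction_on with
  | empty => simp
  | @insert a s' hi ih =>
    rw [Finset.prod_insert hi, Finset.sum_insert hi,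
      ENNReal.rpow_add_of_nonneg _ _ (hσ a (Finset.mem_insert_self a s'))
        (Finset.sum_nonneg fun t ht => hσ t (Finset.mem_insert_of_mem ht)),
      ih fun t ht => hσ t (Finset.mem_insert_of_mem ht)]

lemma aux_holder_core {V Y : Type*} [Fintype V] [Fintype Y] [DecidableEq Y]
    {T : Type*} [Fintype T]
    (coord : T → V → Y) (F : V → ℝ≥0∞)
    (β : T → Y → ℝ≥0∞)
    (p : T → ℝ≥0∞) (hp : ∀ t, p t ≠ 0) (hps : ∑ t, 1 / p t = 1)
    (M : ℝ≥0∞)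
    (hM : ∀ t x, (∑ v, if coord t v = x then F v else 0) ≤ M) :
    (∑ v, F v * ∏ t, β t (coord t v))
      ≤ M * ∏ t, (if p t = ∞ then ⨆ x, β t x else
          (∑ x, β t x ^ (p t).toReal) ^ (1 / (p t).toReal)) := by
  classical
  set sfin : Finset T := Finset.univ.filter (fun t : T => p t ≠ ∞) with hsfin
  set σ : T → ℝ := fun t => (1 / p t).toReal with hσdef
  have hpt_ne_top : ∀ t, (1 : ℝ≥0∞) / p t ≠ ∞ := by
    intro t
    simp [ENNReal.div_eq_top, hp t]
  have hsum_fin : ∑ t ∈ sfin, 1 / p t = 1 := by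
    have : ∑ t ∈ sfin, 1 / p t = ∑ t, 1 / p t := by
      refine Finset.sum_subset (Finset.filter_subset _ _) ?_
      intro t _ ht
      simp only [hsfin, Finset.mem_filter, Finset.mem_univ, true_and, not_not] at ht
      simp [ht]
    rw [this, hps]
  have hσ1 : ∑ t ∈ sfin, σ t = 1 := by
    have := ENNReal.toReal_sum (s := sfin) (f := fun t => 1 / p t)
      (fun t _ => hpt_ne_top t)
    rw [hsum_fin] at this
    simpa [hσdef] using this.symm
  have hσ0 : ∀ t, 0 ≤ σ t := fun t => ENNReal.toReal_nonneg
  have hσ_mul : ∀ t ∈ sfin, (p t).toReal * σ t = 1 := by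
    intro t ht
    simp only [hsfin, Finset.mem_filter] at ht
    rw [hσdef]
    simp only [one_div, ENNReal.toReal_inv]
    exact mul_inv_cancel₀ ((ENNReal.toReal_pos (hp t) ht.2).ne')
  have step1 : ∀ v, F v * ∏ t, β t (coord t v)
      ≤ (∏ t ∈ sfinᶜ, ⨆ x, β t x) * (F v * ∏ t ∈ sfin, β t (coord t v)) := by
    intro v
    rw [← Finset.prod_mul_prod_compl sfin (fun t => β t (coord t v)), ← mul_assoc]
    calc F v * (∏ t ∈ sfin, β t (coord t v)) * ∏ t ∈ sfinᶜ, β t (coord t v)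
        ≤ F v * (∏ t ∈ sfin, β t (coord t v)) * ∏ t ∈ sfinᶜ, ⨆ x, β t x := by
          gcongr with t _
          exact le_iSup (fun x => β t x) (coord t v)
      _ = (∏ t ∈ sfinᶜ, ⨆ x, β t x) * (F v * ∏ t ∈ sfin, β t (coord t v)) := by ring
  have step2 : (∑ v, F v * ∏ t ∈ sfin, β t (coord t v))
      ≤ M * ∏ t ∈ sfin, (∑ x, β t x ^ (p t).toReal) ^ σ t := by
    have hrw : ∀ v, F v * ∏ t ∈ sfin, β t (coord t v)
        = ∏ t ∈ sfin, (F v * β t (coord t v) ^ (p t).toReal) ^ σ t := by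
      intro v
      have hterm : ∀ t ∈ sfin, (F v * β t (coord t v) ^ (p t).toReal) ^ σ t
          = F v ^ σ t * β t (coord t v) := by
        intro t ht
        rw [ENNReal.mul_rpow_of_nonneg _ _ (hσ0 t), ← ENNReal.rpow_mul,
          hσ_mul t ht, ENNReal.rpow_one]
      rw [Finset.prod_congr rfl hterm, Finset.prod_mul_distrib,
        aux_prod_rpow_sum sfin (F v) σ (fun t _ => hσ0 t), hσ1, ENNReal.rpow_one]
    simp only [hrw]
    letI : MeasurableSpace V := ⊤
    haveI : MeasurableSingletonClass V := ⟨fun _ => trivial⟩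
    have holder := ENNReal.lintegral_prod_norm_pow_le (μ := MeasureTheory.Measure.count)
      (s := sfin) (f := fun t v => F v * β t (coord t v) ^ (p t).toReal)
      (fun t _ => (Measurable.aemeasurable (fun s _ => trivial)))
      (p := σ) hσ1 (fun t _ => hσ0 t)
    rw [MeasureTheory.lintegral_count, tsum_fintype] at holder
    have holder2 : (∑ v, ∏ t ∈ sfin, (F v * β t (coord t v) ^ (p t).toReal) ^ σ t)
        ≤ ∏ t ∈ sfin, (∑ v, F v * β t (coord t v) ^ (p t).toReal) ^ σ t := by
      refine holder.trans (le_of_eq (Finset.prod_congr rfl fun t _ => ?_))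
      rw [MeasureTheory.lintegral_count, tsum_fintype]
    refine holder2.trans ?_
    have hfactor : ∀ t ∈ sfin, (∑ v, F v * β t (coord t v) ^ (p t).toReal)
        ≤ (∑ x, β t x ^ (p t).toReal) * M := by
      intro t _
      calc ∑ v, F v * β t (coord t v) ^ (p t).toReal
          = ∑ v, ∑ x, if coord t v = x then β t x ^ (p t).toReal * F v else 0 := by
            refine Finset.sum_congr rfl fun v _ => ?_
            rw [Finset.sum_ite_eq Finset.univ (coord t v)
              (fun x => β t x ^ (p t).toReal * F v)]
            simp [mul_comm]
        _ = ∑ x, ∑ v, if coord t v = x then β t x ^ (p t).toReal * F v else 0 :=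
            Finset.sum_comm
        _ = ∑ x, β t x ^ (p t).toReal * ∑ v, (if coord t v = x then F v else 0) := by
            refine Finset.sum_congr rfl fun x _ => ?_
            rw [Finset.mul_sum]
            refine Finset.sum_congr rfl fun v _ => ?_
            by_cases h : coord t v = x <;> simp [h]
        _ ≤ ∑ x, β t x ^ (p t).toReal * M := by
            gcongr with x _
            exact hM t x
        _ = (∑ x, β t x ^ (p t).toReal) * M := by rw [Finset.sum_mul]
    calc ∏ t ∈ sfin, (∑ v, F v * β t (coord t v) ^ (p t).toReal) ^ σ t
        ≤ ∏ t ∈ sfin, ((∑ x, β t x ^ (p t).toReal) * M) ^ σ t :=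
          Finset.prod_le_prod' fun t ht =>
            ENNReal.rpow_le_rpow (hfactor t ht) (hσ0 t)
      _ = (∏ t ∈ sfin, (∑ x, β t x ^ (p t).toReal) ^ σ t) * ∏ t ∈ sfin, M ^ σ t := by
          rw [← Finset.prod_mul_distrib]
          exact Finset.prod_congr rfl fun t _ => ENNReal.mul_rpow_of_nonneg _ _ (hσ0 t)
      _ = M * ∏ t ∈ sfin, (∑ x, β t x ^ (p t).toReal) ^ σ t := by
          rw [aux_prod_rpow_sum sfin M σ (fun t _ => hσ0 t), hσ1, ENNReal.rpow_one,
            mul_comm]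
  refine (Finset.sum_le_sum fun v _ => step1 v).trans ?_
  rw [← Finset.mul_sum]
  refine (mul_le_mul_right step2 _).trans_eq ?_
  rw [← Finset.prod_mul_prod_compl sfin (fun t => if p t = ∞ then ⨆ x, β t x else
    (∑ x, β t x ^ (p t).toReal) ^ (1 / (p t).toReal))]
  have h1 : ∏ t ∈ sfin, (if p t = ∞ then ⨆ x, β t x else
      (∑ x, β t x ^ (p t).toReal) ^ (1 / (p t).toReal))
      = ∏ t ∈ sfin, (∑ x, β t x ^ (p t).toReal) ^ σ t := by
    refine Finset.prod_congr rfl fun t ht => ?_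
    simp only [hsfin, Finset.mem_filter] at ht
    rw [if_neg ht.2]
    congr 1
    rw [hσdef]
    simp [one_div, ENNReal.toReal_inv]
  have h2 : ∏ t ∈ sfinᶜ, (if p t = ∞ then ⨆ x, β t x else
      (∑ x, β t x ^ (p t).toReal) ^ (1 / (p t).toReal))
      = ∏ t ∈ sfinᶜ, ⨆ x, β t x := by
    refine Finset.prod_congr rfl fun t ht => ?_
    rw [Finset.mem_compl] at ht
    simp only [hsfin, Finset.mem_filter, Finset.mem_univ, true_and, not_not] at ht
    rw [if_pos ht]
  rw [h1, h2]
  ring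

lemma aux_prod_block_le {n d : ℕ} (h : d ≤ n) {κ : ℝ} (hκ : 0 < κ) (g : Fin n → ℝ)
    (hg0 : ∀ i, 0 ≤ g i) (hgκ : ∀ i, g i ≤ κ) :
    ∏ i : Fin n, g i ≤ κ ^ n * ∏ i : Fin d, g (Fin.castLE h i) / κ := by
  classical
  set f : ℕ → ℝ := fun m => if hm : m < n then g ⟨m, hm⟩ else 1 with hf
  have hfg : ∏ i : Fin n, g i = ∏ i ∈ Finset.range n, f i := by
    rw [← Fin.prod_univ_eq_prod_range f n]
    refine Finset.prod_congr rfl fun i _ => ?_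
    rw [hf]
    simp only [Fin.is_lt, dif_pos, Fin.eta]
  have hsplit : ∏ i ∈ Finset.range n, f i
      = (∏ i ∈ Finset.range d, f i) * ∏ i ∈ Finset.Ico d n, f i := by
    rw [Finset.range_eq_Ico, Finset.range_eq_Ico]
    exact (Finset.prod_Ico_consecutive f (Nat.zero_le d) h).symm
  have hfirst : ∏ i ∈ Finset.range d, f i = ∏ i : Fin d, g (Fin.castLE h i) := by
    rw [← Fin.prod_univ_eq_prod_range f d]
    refine Finset.prod_congr rfl fun i _ => ?_
    rw [hf]
    have hi : (i : ℕ) < n := lt_of_lt_of_le i.2 h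
    simp only [hi, dif_pos]
    congr 1
  have hsecond : ∏ i ∈ Finset.Ico d n, f i ≤ κ ^ (n - d) := by
    calc ∏ i ∈ Finset.Ico d n, f i ≤ ∏ _i ∈ Finset.Ico d n, κ := by
          refine Finset.prod_le_prod (fun i _ => ?_) (fun i hi => ?_)
          · rw [hf]; dsimp only; split
            · exact hg0 _
            · exact zero_le_one
          · rw [Finset.mem_Ico] at hi
            rw [hf]; dsimp only
            rw [dif_pos hi.2]
            exact hgκ _
      _ = κ ^ (n - d) := by rw [Finset.prod_const, Nat.card_Ico]
  have hrhs : κ ^ n * ∏ i : Fin d, g (Fin.castLE h i) / κ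
      = (∏ i : Fin d, g (Fin.castLE h i)) * κ ^ (n - d) := by
    rw [Finset.prod_div_distrib, Finset.prod_const, Finset.card_univ, Fintype.card_fin,
      pow_sub₀ κ hκ.ne' h]
    field_simp
  rw [hfg, hsplit, hfirst, hrhs]
  exact mul_le_mul_of_nonneg_left hsecond
    (Finset.prod_nonneg fun i _ => hg0 _)

/-- The summand of `coefNorm`: absolute value of `a` times the weight, as `ℝ≥0∞`. -/
def auxF [Fintype X] [DecidableEq X] (G : Finset X → ℝ) {s : ℕ} (κ : Fin s → ℝ)
    (a : (Fin s → List X) → ℂ) {n : Fin s → ℕ} (v : Tup X n) : ℝ≥0∞ :=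
  ENNReal.ofReal (‖a (toLists v)‖ * wt G κ (toLists v))

/-- The degree-`n` part of `coefNorm`. -/
def auxM [Fintype X] [DecidableEq X] (G : Finset X → ℝ) {s : ℕ} (κ : Fin s → ℝ)
    (a : (Fin s → List X) → ℂ) (n : Fin s → ℕ) : ℝ≥0∞ :=
  ⨆ (x : X) (j : Fin s) (_ : n j ≠ 0) (i : Fin (n j)),
    ∑ v : Tup X n, if v j i = x then auxF G κ a v else 0

lemma coefNorm_eq [Fintype X] [DecidableEq X] (G : Finset X → ℝ) {s : ℕ}
    (κ : Fin s → ℝ) (a : (Fin s → List X) → ℂ) :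
    coefNorm G κ a = ENNReal.ofReal (‖a fun _ => []‖) +
      ∑' n : Fin s → ℕ, if 1 ≤ ∑ j, n j then auxM G κ a n else 0 := rfl

lemma aux_lpNorm_nonneg [Fintype X] [Nonempty X] (p : ℝ≥0∞) (α : X → ℂ) :
    0 ≤ lpNorm p α := by
  unfold lpNorm
  split
  · exact Real.iSup_nonneg fun x => norm_nonneg _
  · exact Real.rpow_nonneg
      (Finset.sum_nonneg fun x _ => Real.rpow_nonneg (norm_nonneg _) _) _

lemma aux_np_le [Fintype X] [Nonempty X] {p : ℝ≥0∞} (hp0 : 0 < p) {κ : ℝ}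
    (hκ : 0 < κ) (α : X → ℂ) :
    (if p = ∞ then ⨆ x, ENNReal.ofReal (‖α x‖ / κ)
      else (∑ x, ENNReal.ofReal (‖α x‖ / κ) ^ p.toReal) ^ (1 / p.toReal))
    ≤ ENNReal.ofReal (lpNorm p α / κ) := by
  by_cases hptop : p = ∞
  · rw [if_pos hptop, hptop]
    unfold lpNorm
    rw [if_pos rfl]
    refine iSup_le fun x => ENNReal.ofReal_le_ofReal ?_
    gcongr
    exact le_ciSup (Finite.bddAbove_range fun x => ‖α x‖) x
  · rw [if_neg hptop]
    have hpt : 0 < p.toReal := ENNReal.toReal_pos hp0.ne' hptop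
    have habs : ∀ x : X, (0:ℝ) ≤ ‖α x‖ / κ :=
      fun x => div_nonneg (norm_nonneg _) hκ.le
    have h1 : ∀ x : X, ENNReal.ofReal (‖α x‖ / κ) ^ p.toReal
        = ENNReal.ofReal ((‖α x‖ / κ) ^ p.toReal) :=
      fun x => ENNReal.ofReal_rpow_of_nonneg (habs x) hpt.le
    simp only [h1]
    rw [← ENNReal.ofReal_sum_of_nonneg
        (fun x _ => Real.rpow_nonneg (habs x) _),
      ENNReal.ofReal_rpow_of_nonneg
        (Finset.sum_nonneg fun x _ => Real.rpow_nonneg (habs x) _)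
        (by positivity)]
    refine le_of_eq (congrArg _ ?_)
    have h2 : ∀ x : X, (‖α x‖ / κ) ^ p.toReal
        = ‖α x‖ ^ p.toReal / κ ^ p.toReal :=
      fun x => Real.div_rpow (norm_nonneg _) hκ.le _
    simp only [h2]
    rw [← Finset.sum_div,
      Real.div_rpow (Finset.sum_nonneg fun x _ =>
        Real.rpow_nonneg (norm_nonneg _) _) (Real.rpow_nonneg hκ.le _),
      ← Real.rpow_mul hκ.le, mul_one_div_cancel hpt.ne', Real.rpow_one]
    unfold lpNorm
    rw [if_neg hptop]

end AuxProof

/-- Young's inequality for analytic functions of fields (Lemma III.1(a)). -/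
theorem statement0 {X : Type*} [Fintype X] [DecidableEq X] [Nonempty X] {s : ℕ}
    (G : Finset X → ℝ)
    (hG1 : ∀ S : Finset X, 1 ≤ G S)
    (hGsing : ∀ S : Finset X, S.card ≤ 1 → G S = 1)
    (hGmono : ∀ S T : Finset X, S ⊆ T → G S ≤ G T)
    (hGmul : ∀ S T : Finset X, (S ∩ T).Nonempty → G (S ∪ T) ≤ G S * G T)
    (κ : Fin s → ℝ) (hκ : ∀ j, 0 < κ j)
    (d : Fin s → ℕ)
    (a : (Fin s → List X) → ℂ) (ha : IsSymm a)
    (hfin : coefNorm G κ a < ⊤)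
    (hdeg : ∀ l : Fin s → List X, (∃ j, (l j).length < d j) → a l = 0)
    (p : Fin s → ℝ≥0∞) (hp : ∀ j, 0 < p j)
    (hsum : ∑ j, (d j : ℝ≥0∞) / p j = 1)
    (α : Fin s → X → ℂ) (hα : ∀ j x, ‖α j x‖ ≤ κ j) :
    ‖fnApply a α‖
      ≤ (coefNorm G κ a).toReal * ∏ j, (lpNorm (p j) (α j) / κ j) ^ d j := by
  classical
  -- abbreviations
  set Bv : Fin s → ℝ≥0∞ := fun j => ENNReal.ofReal (lpNorm (p j) (α j) / κ j) with hBv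
  set C : ℝ≥0∞ := ∏ j, Bv j ^ d j with hC
  have hCtop : C ≠ ∞ := by
    rw [hC]
    exact (ENNReal.prod_lt_top fun j _ => ENNReal.pow_lt_top ENNReal.ofReal_lt_top).ne
  have hd : ∃ j0, d j0 ≠ 0 := by
    by_contra hcon
    push_neg at hcon
    rw [Finset.sum_eq_zero (fun j _ => by rw [hcon j]; simp)] at hsum
    exact zero_ne_one hsum
  have hMle : ∀ n : Fin s → ℕ,
      (if 1 ≤ ∑ j, n j then auxM G κ a n else 0) ≤ coefNorm G κ a := by
    intro n
    refine le_trans (ENNReal.le_tsum (f := fun n : Fin s → ℕ =>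
      if 1 ≤ ∑ j, n j then auxM G κ a n else 0) n) ?_
    rw [coefNorm_eq]
    exact self_le_add_left _ _
  -- the key per-degree estimate
  have key : ∀ n : Fin s → ℕ,
      (∑ v : Tup X n, ENNReal.ofReal (‖a (toLists v)‖
          * ∏ j, ∏ i, ‖α j (v j i)‖))
        ≤ (if 1 ≤ ∑ j, n j then auxM G κ a n else 0) * C := by
    intro n
    by_cases hdn : ∀ j, d j ≤ n j
    · obtain ⟨j0, hj0⟩ := hd
      have hone : 1 ≤ ∑ j, n j :=
        le_trans (le_trans (Nat.one_le_iff_ne_zero.mpr hj0) (hdn j0))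
          (Finset.single_le_sum (fun j _ => Nat.zero_le _) (Finset.mem_univ j0))
      rw [if_pos hone]
      -- pointwise bound
      have hpt : ∀ v : Tup X n,
          ENNReal.ofReal (‖a (toLists v)‖
              * ∏ j, ∏ i, ‖α j (v j i)‖)
          ≤ auxF G κ a v * ∏ t : Σ j : Fin s, Fin (d j),
              ENNReal.ofReal (‖α t.1 (v t.1 (Fin.castLE (hdn t.1) t.2))‖ / κ t.1) := by
        intro v
        have hβ0 : ∀ (j : Fin s) (i : Fin (d j)),
            (0:ℝ) ≤ ‖α j (v j (Fin.castLE (hdn j) i))‖ / κ j :=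
          fun j i => div_nonneg (norm_nonneg _) (hκ j).le
        have hwt0 : 0 ≤ wt G κ (toLists v) :=
          mul_nonneg (Finset.prod_nonneg fun j _ => pow_nonneg (hκ j).le _)
            (zero_le_one.trans (hG1 _))
        have hlen : ∀ j, ((toLists v) j).length = n j := fun j => List.length_ofFn
        have hPj : ∀ j : Fin s, (∏ i, ‖α j (v j i)‖)
            ≤ κ j ^ (n j) * ∏ i : Fin (d j),
                ‖α j (v j (Fin.castLE (hdn j) i))‖ / κ j :=
          fun j => aux_prod_block_le (hdn j) (hκ j)
            (fun i => ‖α j (v j i)‖)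
            (fun i => norm_nonneg _) (fun i => hα j _)
        have hreal : ‖a (toLists v)‖ * ∏ j, ∏ i, ‖α j (v j i)‖
            ≤ (‖a (toLists v)‖ * wt G κ (toLists v))
              * ∏ j, ∏ i : Fin (d j),
                  ‖α j (v j (Fin.castLE (hdn j) i))‖ / κ j := by
          have hR0 : (0:ℝ) ≤ ∏ j, ∏ i : Fin (d j),
              ‖α j (v j (Fin.castLE (hdn j) i))‖ / κ j :=
            Finset.prod_nonneg fun j _ => Finset.prod_nonneg fun i _ => hβ0 j i
          have h1 : (∏ j, ∏ i, ‖α j (v j i)‖)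
              ≤ ∏ j, (κ j ^ (n j) * ∏ i : Fin (d j),
                  ‖α j (v j (Fin.castLE (hdn j) i))‖ / κ j) :=
            Finset.prod_le_prod
              (fun j _ => Finset.prod_nonneg fun i _ => norm_nonneg _)
              (fun j _ => hPj j)
          have h2 : ∏ j, (κ j ^ (n j) * ∏ i : Fin (d j),
                ‖α j (v j (Fin.castLE (hdn j) i))‖ / κ j)
              = (∏ j, κ j ^ (n j)) * ∏ j, ∏ i : Fin (d j),
                  ‖α j (v j (Fin.castLE (hdn j) i))‖ / κ j :=
            Finset.prod_mul_distrib
          have h3 : (∏ j, κ j ^ (n j)) ≤ wt G κ (toLists v) := by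
            unfold wt
            simp only [hlen]
            exact le_mul_of_one_le_right
              (Finset.prod_nonneg fun j _ => pow_nonneg (hκ j).le _) (hG1 _)
          calc ‖a (toLists v)‖ * ∏ j, ∏ i, ‖α j (v j i)‖
              ≤ ‖a (toLists v)‖ * ((∏ j, κ j ^ (n j))
                  * ∏ j, ∏ i : Fin (d j),
                      ‖α j (v j (Fin.castLE (hdn j) i))‖ / κ j) := by
                refine mul_le_mul_of_nonneg_left ?_ (norm_nonneg _)
                rw [← h2]
                exact h1
            _ ≤ ‖a (toLists v)‖ * (wt G κ (toLists v)
                  * ∏ j, ∏ i : Fin (d j),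
                      ‖α j (v j (Fin.castLE (hdn j) i))‖ / κ j) := by
                refine mul_le_mul_of_nonneg_left ?_ (norm_nonneg _)
                exact mul_le_mul_of_nonneg_right h3 hR0
            _ = (‖a (toLists v)‖ * wt G κ (toLists v))
                  * ∏ j, ∏ i : Fin (d j),
                      ‖α j (v j (Fin.castLE (hdn j) i))‖ / κ j := by ring
        have hprod : ENNReal.ofReal (∏ j, ∏ i : Fin (d j),
              ‖α j (v j (Fin.castLE (hdn j) i))‖ / κ j)
            = ∏ j, ∏ i : Fin (d j), ENNReal.ofReal
                (‖α j (v j (Fin.castLE (hdn j) i))‖ / κ j) := by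
          rw [ENNReal.ofReal_prod_of_nonneg
            (fun j _ => Finset.prod_nonneg fun i _ => hβ0 j i)]
          exact Finset.prod_congr rfl fun j _ =>
            ENNReal.ofReal_prod_of_nonneg (fun i _ => hβ0 j i)
        calc ENNReal.ofReal (‖a (toLists v)‖
              * ∏ j, ∏ i, ‖α j (v j i)‖)
            ≤ ENNReal.ofReal ((‖a (toLists v)‖ * wt G κ (toLists v))
                * ∏ j, ∏ i : Fin (d j),
                    ‖α j (v j (Fin.castLE (hdn j) i))‖ / κ j) :=
              ENNReal.ofReal_le_ofReal hreal
          _ = auxF G κ a v * ∏ t : Σ j : Fin s, Fin (d j),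
                ENNReal.ofReal (‖α t.1 (v t.1 (Fin.castLE (hdn t.1) t.2))‖ / κ t.1) := by
              rw [ENNReal.ofReal_mul (mul_nonneg (norm_nonneg _) hwt0), hprod]
              rw [← Finset.univ_sigma_univ, Finset.prod_sigma]
              rfl
      -- exponent bookkeeping
      have hps : ∑ t : Σ j : Fin s, Fin (d j), 1 / p t.1 = 1 := by
        rw [← Finset.univ_sigma_univ, Finset.sum_sigma]
        simp only [Finset.sum_const, Finset.card_univ, Fintype.card_fin, nsmul_eq_mul,
          mul_one_div]
        exact hsum
      -- the sup bound
      have hM : ∀ (t : Σ j : Fin s, Fin (d j)) (x : X),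
          (∑ v : Tup X n, if v t.1 (Fin.castLE (hdn t.1) t.2) = x
            then auxF G κ a v else 0) ≤ auxM G κ a n := by
        intro t x
        have hnj : n t.1 ≠ 0 := by
          have h1 : 0 < d t.1 := t.2.pos
          have h2 := hdn t.1
          omega
        exact le_iSup_of_le x (le_iSup_of_le t.1 (le_iSup_of_le hnj
          (le_iSup_of_le (Fin.castLE (hdn t.1) t.2) le_rfl)))
      have hH := aux_holder_core
        (coord := fun (t : Σ j : Fin s, Fin (d j)) (v : Tup X n) =>
          v t.1 (Fin.castLE (hdn t.1) t.2))
        (F := fun v : Tup X n => auxF G κ a v)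
        (β := fun (t : Σ j : Fin s, Fin (d j)) (x : X) =>
          ENNReal.ofReal (‖α t.1 x‖ / κ t.1))
        (p := fun t : Σ j : Fin s, Fin (d j) => p t.1)
        (fun t => (hp t.1).ne') hps (auxM G κ a n) hM
      have hnpB : (∏ t : Σ j : Fin s, Fin (d j),
          (if p t.1 = ∞ then ⨆ x : X, ENNReal.ofReal (‖α t.1 x‖ / κ t.1)
            else (∑ x : X, ENNReal.ofReal (‖α t.1 x‖ / κ t.1)
              ^ (p t.1).toReal) ^ (1 / (p t.1).toReal))) ≤ C := by
        rw [hC]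
        calc (∏ t : Σ j : Fin s, Fin (d j), _)
            ≤ ∏ t : Σ j : Fin s, Fin (d j), Bv t.1 :=
              Finset.prod_le_prod' fun t _ => aux_np_le (hp t.1) (hκ t.1) (α t.1)
          _ = ∏ j, Bv j ^ d j := by
              rw [← Finset.univ_sigma_univ, Finset.prod_sigma]
              exact Finset.prod_congr rfl fun j _ => by simp
      calc (∑ v : Tup X n, ENNReal.ofReal (‖a (toLists v)‖
              * ∏ j, ∏ i, ‖α j (v j i)‖))
          ≤ ∑ v : Tup X n, auxF G κ a v * ∏ t : Σ j : Fin s, Fin (d j),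
              ENNReal.ofReal (‖α t.1 (v t.1 (Fin.castLE (hdn t.1) t.2))‖ / κ t.1) :=
            Finset.sum_le_sum fun v _ => hpt v
        _ ≤ auxM G κ a n * ∏ t : Σ j : Fin s, Fin (d j),
              (if p t.1 = ∞ then ⨆ x : X, ENNReal.ofReal (‖α t.1 x‖ / κ t.1)
                else (∑ x : X, ENNReal.ofReal (‖α t.1 x‖ / κ t.1)
                  ^ (p t.1).toReal) ^ (1 / (p t.1).toReal)) := hH
        _ ≤ auxM G κ a n * C := mul_le_mul_right hnpB _
    · push_neg at hdn
      obtain ⟨j, hj⟩ := hdn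
      have hzero : ∀ v : Tup X n, a (toLists v) = 0 := by
        intro v
        refine hdeg _ ⟨j, ?_⟩
        simpa [toLists, List.length_ofFn] using hj
      have : (∑ v : Tup X n, ENNReal.ofReal (‖a (toLists v)‖
          * ∏ j, ∏ i, ‖α j (v j i)‖)) = 0 :=
        Finset.sum_eq_zero fun v _ => by rw [hzero v]; simp
      rw [this]
      exact zero_le
  -- assemble the sum over all degrees
  have habs_eq : ∀ q : Σ n : Fin s → ℕ, Tup X n,
      ‖a (toLists q.2) * ∏ j, ∏ i, α j (q.2 j i)‖
        = ‖a (toLists q.2)‖ * ∏ j, ∏ i, ‖α j (q.2 j i)‖ := by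
    intro q
    rw [norm_mul]
    congr 1
    rw [norm_prod]
    exact Finset.prod_congr rfl fun j _ => norm_prod _ _
  set S : ℝ≥0∞ := ∑' q : Σ n : Fin s → ℕ, Tup X n,
    ENNReal.ofReal ‖a (toLists q.2) * ∏ j, ∏ i, α j (q.2 j i)‖ with hSdef
  have hSle : S ≤ coefNorm G κ a * C := by
    rw [hSdef, ENNReal.tsum_sigma']
    calc (∑' (n : Fin s → ℕ) (v : Tup X n),
            ENNReal.ofReal ‖a (toLists v) * ∏ j, ∏ i, α j (v j i)‖)
        = ∑' n : Fin s → ℕ, ∑ v : Tup X n,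
            ENNReal.ofReal (‖a (toLists v)‖
              * ∏ j, ∏ i, ‖α j (v j i)‖) := by
          refine tsum_congr fun n => ?_
          rw [tsum_fintype]
          exact Finset.sum_congr rfl fun v _ => by rw [habs_eq ⟨n, v⟩]
      _ ≤ ∑' n : Fin s → ℕ, (if 1 ≤ ∑ j, n j then auxM G κ a n else 0) * C :=
          ENNReal.tsum_le_tsum fun n => key n
      _ = (∑' n : Fin s → ℕ, if 1 ≤ ∑ j, n j then auxM G κ a n else 0) * C :=
          ENNReal.tsum_mul_right
      _ ≤ coefNorm G κ a * C := by
          refine mul_le_mul_left ?_ C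
          rw [coefNorm_eq]
          exact self_le_add_left _ _
  have hCtR : C.toReal = ∏ j, (lpNorm (p j) (α j) / κ j) ^ d j := by
    rw [hC, ENNReal.toReal_prod]
    refine Finset.prod_congr rfl fun j _ => ?_
    rw [ENNReal.toReal_pow, hBv]
    rw [ENNReal.toReal_ofReal (div_nonneg (aux_lpNorm_nonneg _ _) (hκ j).le)]
  by_cases hsumm : Summable (fun q : Σ n : Fin s → ℕ, Tup X n =>
      a (toLists q.2) * ∏ j, ∏ i, α j (q.2 j i))
  · have hns : Summable (fun q : Σ n : Fin s → ℕ, Tup X n =>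
        ‖a (toLists q.2) * ∏ j, ∏ i, α j (q.2 j i)‖) :=
      summable_norm_iff.mpr hsumm
    have habs : ‖fnApply a α‖
        ≤ ∑' q : Σ n : Fin s → ℕ, Tup X n,
            ‖a (toLists q.2) * ∏ j, ∏ i, α j (q.2 j i)‖ := by
      exact norm_tsum_le_tsum_norm hns
    have hof : ENNReal.ofReal (∑' q : Σ n : Fin s → ℕ, Tup X n,
        ‖a (toLists q.2) * ∏ j, ∏ i, α j (q.2 j i)‖) = S :=
      ENNReal.ofReal_tsum_of_nonneg (fun _ => norm_nonneg _) hns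
    have htsum_eq : (∑' q : Σ n : Fin s → ℕ, Tup X n,
        ‖a (toLists q.2) * ∏ j, ∏ i, α j (q.2 j i)‖) = S.toReal := by
      rw [← hof, ENNReal.toReal_ofReal (tsum_nonneg fun _ => norm_nonneg _)]
    have hmono : S.toReal ≤ (coefNorm G κ a * C).toReal :=
      ENNReal.toReal_mono (ENNReal.mul_ne_top hfin.ne hCtop) hSle
    rw [ENNReal.toReal_mul, hCtR] at hmono
    calc ‖fnApply a α‖ ≤ S.toReal := htsum_eq ▸ habs
      _ ≤ (coefNorm G κ a).toReal * ∏ j, (lpNorm (p j) (α j) / κ j) ^ d j := hmono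
  · unfold fnApply
    rw [tsum_eq_zero_of_not_summable hsumm]
    rw [norm_zero]
    exact mul_nonneg ENNReal.toReal_nonneg
      (Finset.prod_nonneg fun j _ => pow_nonneg
        (div_nonneg (aux_lpNorm_nonneg _ _) (hκ j).le) _)


end BFKT
end

section
/- Let λ₁,…,λ_s > 0 be further constant weight factors and let σ ≥ 1. Let w_δ be the weight system (with the same G) for the 2s fields (α₁,…,α_s,δ₁,…,δ_s) assigning weight factor κ_j to α_j and λ_j to δ_j, and let w_σ be the weight system for the s fields (α₁,…,α_s) assigning weight factor κ_j + σλ_j to α_j. Let A be an s-field map with ⦀A⦀_{w_σ} < ∞ and symmetric kernel (for each x and j, A(x;x⃗₁,…,x⃗_s) invariant under permutations of the components of x⃗_j), and let δA be the 2s-field map with δA(α₁,…,α_s,δ₁,…,δ_s) = A(α₁+δ₁,…,α_s+δ_s) − A(α₁,…,α_s), whose kernel is δA(x; x⃗₁,…,x⃗_s; y⃗₁,…,y⃗_s) = χ(n(y⃗₁)+⋯+n(y⃗_s) ≥ 1) · A(x; x⃗₁∘y⃗₁,…,x⃗_s∘y⃗_s) · Π_{j=1}^s binom(n(x⃗_j)+n(y⃗_j),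 n(y⃗_j)). Then ⦀δA⦀_{w_δ} ≤ σ^{−1} ⦀A⦀_{w_σ}. -/
open scoped BigOperators ENNReal Classical

namespace BFKT

/-- The kernel of the `2s`-field map
`δA(α₁,…,α_s,δ₁,…,δ_s) = A(α₁+δ₁,…,α_s+δ_s) − A(α₁,…,α_s)`:
the first `s` slots are the `α`-arguments, the last `s` slots the `δ`-arguments. -/
def deltaKer {X : Type*} {s : ℕ} (A : X → (Fin s → List X) → ℂ) :
    X → (Fin (s + s) → List X) → ℂ :=
  fun x l =>
    if 1 ≤ ∑ j : Fin s, (l (Fin.natAdd s j)).length then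
      A x (fun j => l (Fin.castAdd s j) ++ l (Fin.natAdd s j)) *
        ∏ j : Fin s,
          (Nat.choose ((l (Fin.castAdd s j)).length + (l (Fin.natAdd s j)).length)
            ((l (Fin.natAdd s j)).length) : ℂ)
    else 0

section DeltaAux

open Finset

variable {X : Type*}

/-- Merge a `2s`-tuple into an `s`-tuple by concatenating corresponding blocks. -/
def splitTup {s : ℕ} (ν : Fin (s + s) → ℕ) (v : Tup X ν) :
    Tup X (fun j => ν (Fin.castAdd s j) + ν (Fin.natAdd s j)) :=
  fun j => Fin.append (v (Fin.castAdd s j)) (v (Fin.natAdd s j))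

/-- `splitTup` as an equivalence. -/
def splitEquiv {s : ℕ} (ν : Fin (s + s) → ℕ) :
    Tup X ν ≃ Tup X (fun j => ν (Fin.castAdd s j) + ν (Fin.natAdd s j)) where
  toFun := splitTup ν
  invFun w j := Fin.addCases (motive := fun j' => Fin (ν j') → X)
      (fun j₀ i => w j₀ (Fin.castAdd (ν (Fin.natAdd s j₀)) i))
      (fun j₀ i => w j₀ (Fin.natAdd (ν (Fin.castAdd s j₀)) i)) j
  left_inv v := by
    funext j
    induction j using Fin.addCases with
    | left j₀ =>
      simp only [Fin.addCases_left]
      funext i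
      exact Fin.append_left _ _ _
    | right j₀ =>
      simp only [Fin.addCases_right]
      funext i
      exact Fin.append_right _ _ _
  right_inv w := by
    funext j i
    induction i using Fin.addCases with
    | left i₀ => simp only [splitTup, Fin.append_left, Fin.addCases_left]
    | right i₀ => simp only [splitTup, Fin.append_right, Fin.addCases_right]

lemma toLists_splitTup {s : ℕ} (ν : Fin (s + s) → ℕ) (v : Tup X ν) (j : Fin s) :
    toLists (splitTup ν v) j = toLists v (Fin.castAdd s j) ++ toLists v (Fin.natAdd s j) :=
  List.ofFn_fin_append _ _

lemma supp_splitTup [DecidableEq X] {s : ℕ} (ν : Fin (s + s) → ℕ) (v : Tup X ν) :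
    supp (toLists (splitTup ν v)) = supp (toLists v) := by
  ext y
  simp only [supp, Finset.mem_biUnion, Finset.mem_univ, true_and, List.mem_toFinset,
    toLists, List.mem_ofFn, Set.mem_range]
  constructor
  · rintro ⟨j, i, hi⟩
    induction i using Fin.addCases with
    | left i₀ =>
      exact ⟨Fin.castAdd s j, i₀, by simpa [splitTup, Fin.append_left] using hi⟩
    | right i₀ =>
      exact ⟨Fin.natAdd s j, i₀, by simpa [splitTup, Fin.append_right] using hi⟩
  · rintro ⟨j, i, hi⟩
    induction j using Fin.addCases with
    | left j₀ =>
      exact ⟨j₀, Fin.castAdd (ν (Fin.natAdd s j₀)) i, by simpa [splitTup, Fin.append_left] using hi⟩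
    | right j₀ =>
      exact ⟨j₀, Fin.natAdd (ν (Fin.castAdd s j₀)) i, by simpa [splitTup, Fin.append_right] using hi⟩

/-- The combinatorial ratio appearing in Lemma III.6(b). -/
noncomputable def ratio {s : ℕ} (κ lam : Fin s → ℝ) (σ : ℝ) (N m : Fin s → ℕ) : ℝ :=
  (∏ j, ((N j).choose (m j) : ℝ) * κ j ^ (N j - m j) * lam j ^ m j) /
    ∏ j, (κ j + σ * lam j) ^ N j

lemma ratio_nonneg {s : ℕ} (κ lam : Fin s → ℝ) (hκ : ∀ j, 0 < κ j)
    (hlam : ∀ j, 0 < lam j) (σ : ℝ) (hσ : 1 ≤ σ) (N m : Fin s → ℕ) :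
    0 ≤ ratio κ lam σ N m := by
  have hσ0 : (0:ℝ) < σ := lt_of_lt_of_le one_pos hσ
  refine div_nonneg (Finset.prod_nonneg fun j _ => ?_) (Finset.prod_nonneg fun j _ => ?_)
  · exact mul_nonneg (mul_nonneg (Nat.cast_nonneg _) (pow_nonneg (hκ j).le _))
      (pow_nonneg (hlam j).le _)
  · have h : 0 < κ j + σ * lam j := by nlinarith [hκ j, hlam j]
    exact (pow_pos h _).le

lemma denom_pos {s : ℕ} (κ lam : Fin s → ℝ) (hκ : ∀ j, 0 < κ j)
    (hlam : ∀ j, 0 < lam j) (σ : ℝ) (hσ : 1 ≤ σ) (N : Fin s → ℕ) :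
    0 < ∏ j, (κ j + σ * lam j) ^ N j := by
  have hσ0 : (0:ℝ) < σ := lt_of_lt_of_le one_pos hσ
  exact Finset.prod_pos fun j _ => pow_pos (by nlinarith [hκ j, hlam j]) _

lemma delta_term_eq [DecidableEq X] {s : ℕ} (G : Finset X → ℝ)
    (κ lam : Fin s → ℝ) (hκ : ∀ j, 0 < κ j) (hlam : ∀ j, 0 < lam j)
    (σ : ℝ) (hσ : 1 ≤ σ) (A : X → (Fin s → List X) → ℂ)
    (ν : Fin (s + s) → ℕ) (hm : 1 ≤ ∑ j : Fin s, ν (Fin.natAdd s j))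
    (x : X) (v : Tup X ν) :
    ‖deltaKer A x (toLists v)‖ * (∏ j, Fin.append κ lam j ^ ν j) *
        G (insert x (supp (toLists v)))
    = ratio κ lam σ (fun j => ν (Fin.castAdd s j) + ν (Fin.natAdd s j))
        (fun j => ν (Fin.natAdd s j)) *
      (‖A x (toLists (splitTup ν v))‖ *
        (∏ j, (κ j + σ * lam j) ^ (ν (Fin.castAdd s j) + ν (Fin.natAdd s j))) *
        G (insert x (supp (toLists (splitTup ν v))))) := by
  have h1 : (fun j => toLists v (Fin.castAdd s j) ++ toLists v (Fin.natAdd s j))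
      = toLists (splitTup ν v) := by
    funext j; exact (toLists_splitTup ν v j).symm
  have hlen : ∀ j : Fin (s + s), (toLists v j).length = ν j := fun j => by
    simp [toLists]
  have hdk : deltaKer A x (toLists v)
      = A x (toLists (splitTup ν v)) *
        ∏ j : Fin s, ((ν (Fin.castAdd s j) + ν (Fin.natAdd s j)).choose (ν (Fin.natAdd s j)) : ℂ) := by
    rw [deltaKer]
    simp only [hlen, h1]
    rw [if_pos hm]
  have habs : ‖deltaKer A x (toLists v)‖
      = ‖A x (toLists (splitTup ν v))‖ *
        ∏ j : Fin s, ((ν (Fin.castAdd s j) + ν (Fin.natAdd s j)).choose (ν (Fin.natAdd s j)) : ℝ) := by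
    rw [hdk, norm_mul, norm_prod]
    simp
  have hw : (∏ j, Fin.append κ lam j ^ ν j)
      = (∏ j : Fin s, κ j ^ ν (Fin.castAdd s j)) * ∏ j : Fin s, lam j ^ ν (Fin.natAdd s j) := by
    rw [Fin.prod_univ_add (f := fun j => Fin.append κ lam j ^ ν j)]
    simp only [Fin.append_left, Fin.append_right]
  rw [habs, hw, supp_splitTup, ratio]
  have hD : (0:ℝ) < ∏ j, (κ j + σ * lam j) ^ (ν (Fin.castAdd s j) + ν (Fin.natAdd s j)) :=
    denom_pos κ lam hκ hlam σ hσ _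
  have hnum : (∏ j, (((ν (Fin.castAdd s j) + ν (Fin.natAdd s j)).choose (ν (Fin.natAdd s j)) : ℝ))
        * κ j ^ ((ν (Fin.castAdd s j) + ν (Fin.natAdd s j)) - ν (Fin.natAdd s j))
        * lam j ^ ν (Fin.natAdd s j))
      = (∏ j : Fin s, ((ν (Fin.castAdd s j) + ν (Fin.natAdd s j)).choose (ν (Fin.natAdd s j)) : ℝ))
        * ((∏ j : Fin s, κ j ^ ν (Fin.castAdd s j)) * ∏ j : Fin s, lam j ^ ν (Fin.natAdd s j)) := by
    rw [← Finset.prod_mul_distrib, ← Finset.prod_mul_distrib]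
    refine Finset.prod_congr rfl fun j _ => ?_
    rw [Nat.add_sub_cancel]; ring
  rw [hnum, eq_comm, div_mul_eq_mul_div, div_eq_iff hD.ne']
  ring


lemma deltaKer_eq_zero' {s : ℕ} (A : X → (Fin s → List X) → ℂ)
    (ν : Fin (s + s) → ℕ) (hm : ¬ 1 ≤ ∑ j : Fin s, ν (Fin.natAdd s j))
    (x : X) (v : Tup X ν) : deltaKer A x (toLists v) = 0 := by
  rw [deltaKer, if_neg (by simpa [toLists] using hm)]

lemma kerL_delta_zero [Fintype X] [DecidableEq X] {s : ℕ} (G : Finset X → ℝ)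
    (κ lam : Fin s → ℝ) (A : X → (Fin s → List X) → ℂ)
    (ν : Fin (s + s) → ℕ) (hm : ¬ 1 ≤ ∑ j : Fin s, ν (Fin.natAdd s j)) :
    kerL G (Fin.append κ lam) (deltaKer A) ν = 0 := by
  refine le_antisymm ?_ zero_le
  rw [kerL]
  refine iSup_le fun x => le_of_eq (Finset.sum_eq_zero fun v _ => ?_)
  rw [deltaKer_eq_zero' A ν hm x v]
  simp

lemma kerR_delta_zero [Fintype X] [DecidableEq X] {s : ℕ} (G : Finset X → ℝ)
    (κ lam : Fin s → ℝ) (A : X → (Fin s → List X) → ℂ)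
    (ν : Fin (s + s) → ℕ) (hm : ¬ 1 ≤ ∑ j : Fin s, ν (Fin.natAdd s j)) :
    kerR G (Fin.append κ lam) (deltaKer A) ν = 0 := by
  refine le_antisymm ?_ zero_le
  rw [kerR]
  refine iSup_le fun x' => iSup_le fun j => iSup_le fun hj => iSup_le fun i =>
    le_of_eq (Finset.sum_eq_zero fun x _ => Finset.sum_eq_zero fun v _ => ?_)
  rw [deltaKer_eq_zero' A ν hm x v]
  simp

lemma kerL_delta_le [Fintype X] [DecidableEq X] {s : ℕ} (G : Finset X → ℝ)
    (κ lam : Fin s → ℝ) (hκ : ∀ j, 0 < κ j) (hlam : ∀ j, 0 < lam j)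
    (σ : ℝ) (hσ : 1 ≤ σ) (A : X → (Fin s → List X) → ℂ)
    (ν : Fin (s + s) → ℕ) (hm : 1 ≤ ∑ j : Fin s, ν (Fin.natAdd s j)) :
    kerL G (Fin.append κ lam) (deltaKer A) ν ≤
      ENNReal.ofReal (ratio κ lam σ (fun j => ν (Fin.castAdd s j) + ν (Fin.natAdd s j))
          (fun j => ν (Fin.natAdd s j))) *
        kerL G (fun j => κ j + σ * lam j) A
          (fun j => ν (Fin.castAdd s j) + ν (Fin.natAdd s j)) := by
  rw [kerL, kerL]
  refine iSup_le fun x => ?_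
  have h2 : (∑ v : Tup X ν,
        ENNReal.ofReal (‖deltaKer A x (toLists v)‖ *
          (∏ j, Fin.append κ lam j ^ ν j) * G (insert x (supp (toLists v)))))
      = ENNReal.ofReal (ratio κ lam σ (fun j => ν (Fin.castAdd s j) + ν (Fin.natAdd s j))
          (fun j => ν (Fin.natAdd s j))) *
        ∑ w : Tup X (fun j => ν (Fin.castAdd s j) + ν (Fin.natAdd s j)),
          ENNReal.ofReal (‖A x (toLists w)‖ *
            (∏ j, (κ j + σ * lam j) ^ (ν (Fin.castAdd s j) + ν (Fin.natAdd s j))) *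
            G (insert x (supp (toLists w)))) := by
    rw [Finset.mul_sum]
    refine Fintype.sum_equiv (splitEquiv ν) _ _ fun v => ?_
    rw [delta_term_eq G κ lam hκ hlam σ hσ A ν hm x v,
      ENNReal.ofReal_mul (ratio_nonneg κ lam hκ hlam σ hσ _ _)]
    rfl
  rw [h2]
  exact mul_le_mul_right (le_iSup (fun x => ∑ v : Tup X fun j => ν (Fin.castAdd s j) + ν (Fin.natAdd s j),
    ENNReal.ofReal (‖A x (toLists v)‖ *
      (∏ j : Fin s, (κ j + σ * lam j) ^ (ν (Fin.castAdd s j) + ν (Fin.natAdd s j))) *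
      G (insert x (supp (toLists v))))) x) _

lemma kerR_delta_le [Fintype X] [DecidableEq X] {s : ℕ} (G : Finset X → ℝ)
    (κ lam : Fin s → ℝ) (hκ : ∀ j, 0 < κ j) (hlam : ∀ j, 0 < lam j)
    (σ : ℝ) (hσ : 1 ≤ σ) (A : X → (Fin s → List X) → ℂ)
    (ν : Fin (s + s) → ℕ) (hm : 1 ≤ ∑ j : Fin s, ν (Fin.natAdd s j)) :
    kerR G (Fin.append κ lam) (deltaKer A) ν ≤
      ENNReal.ofReal (ratio κ lam σ (fun j => ν (Fin.castAdd s j) + ν (Fin.natAdd s j))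
          (fun j => ν (Fin.natAdd s j))) *
        kerR G (fun j => κ j + σ * lam j) A
          (fun j => ν (Fin.castAdd s j) + ν (Fin.natAdd s j)) := by
  rw [kerR, kerR]
  refine iSup_le fun x' => iSup_le fun j => ?_
  induction j using Fin.addCases with
  | left j₀ =>
    refine iSup_le fun hj => iSup_le fun i => ?_
    have hN0 : ν (Fin.castAdd s j₀) + ν (Fin.natAdd s j₀) ≠ 0 := by omega
    have h2 : (∑ x : X, ∑ v : Tup X ν,
          if v (Fin.castAdd s j₀) i = x' then
            ENNReal.ofReal (‖deltaKer A x (toLists v)‖ *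
              (∏ j, Fin.append κ lam j ^ ν j) * G (insert x (supp (toLists v))))
          else 0)
        = ENNReal.ofReal (ratio κ lam σ (fun j => ν (Fin.castAdd s j) + ν (Fin.natAdd s j))
            (fun j => ν (Fin.natAdd s j))) *
          ∑ x : X, ∑ w : Tup X (fun j => ν (Fin.castAdd s j) + ν (Fin.natAdd s j)),
            if w j₀ (Fin.castAdd (ν (Fin.natAdd s j₀)) i) = x' then
              ENNReal.ofReal (‖A x (toLists w)‖ *
                (∏ j, (κ j + σ * lam j) ^ (ν (Fin.castAdd s j) + ν (Fin.natAdd s j))) *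
                G (insert x (supp (toLists w))))
            else 0 := by
      rw [Finset.mul_sum]
      refine Finset.sum_congr rfl fun x _ => ?_
      rw [Finset.mul_sum]
      refine Fintype.sum_equiv (splitEquiv ν) _ _ fun v => ?_
      have hcond : splitTup ν v j₀ (Fin.castAdd (ν (Fin.natAdd s j₀)) i)
          = v (Fin.castAdd s j₀) i := Fin.append_left _ _ _
      show _ = _ * if splitTup ν v j₀ (Fin.castAdd (ν (Fin.natAdd s j₀)) i) = x' then _ else _
      rw [hcond]
      split_ifs with h
      · rw [delta_term_eq G κ lam hκ hlam σ hσ A ν hm x v,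
          ENNReal.ofReal_mul (ratio_nonneg κ lam hκ hlam σ hσ _ _)]
        rfl
      · rw [mul_zero]
    rw [h2]
    refine mul_le_mul_right ?_ _
    exact le_iSup_of_le x' (le_iSup_of_le j₀ (le_iSup_of_le hN0
      (le_iSup_of_le (Fin.castAdd (ν (Fin.natAdd s j₀)) i) le_rfl)))
  | right j₀ =>
    refine iSup_le fun hj => iSup_le fun i => ?_
    have hN0 : ν (Fin.castAdd s j₀) + ν (Fin.natAdd s j₀) ≠ 0 := by omega
    have h2 : (∑ x : X, ∑ v : Tup X ν,
          if v (Fin.natAdd s j₀) i = x' then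
            ENNReal.ofReal (‖deltaKer A x (toLists v)‖ *
              (∏ j, Fin.append κ lam j ^ ν j) * G (insert x (supp (toLists v))))
          else 0)
        = ENNReal.ofReal (ratio κ lam σ (fun j => ν (Fin.castAdd s j) + ν (Fin.natAdd s j))
            (fun j => ν (Fin.natAdd s j))) *
          ∑ x : X, ∑ w : Tup X (fun j => ν (Fin.castAdd s j) + ν (Fin.natAdd s j)),
            if w j₀ (Fin.natAdd (ν (Fin.castAdd s j₀)) i) = x' then
              ENNReal.ofReal (‖A x (toLists w)‖ *
                (∏ j, (κ j + σ * lam j) ^ (ν (Fin.castAdd s j) + ν (Fin.natAdd s j))) *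
                G (insert x (supp (toLists w))))
            else 0 := by
      rw [Finset.mul_sum]
      refine Finset.sum_congr rfl fun x _ => ?_
      rw [Finset.mul_sum]
      refine Fintype.sum_equiv (splitEquiv ν) _ _ fun v => ?_
      have hcond : splitTup ν v j₀ (Fin.natAdd (ν (Fin.castAdd s j₀)) i)
          = v (Fin.natAdd s j₀) i := Fin.append_right _ _ _
      show _ = _ * if splitTup ν v j₀ (Fin.natAdd (ν (Fin.castAdd s j₀)) i) = x' then _ else _
      rw [hcond]
      split_ifs with h
      · rw [delta_term_eq G κ lam hκ hlam σ hσ A ν hm x v,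
          ENNReal.ofReal_mul (ratio_nonneg κ lam hκ hlam σ hσ _ _)]
        rfl
      · rw [mul_zero]
    rw [h2]
    refine mul_le_mul_right ?_ _
    exact le_iSup_of_le x' (le_iSup_of_le j₀ (le_iSup_of_le hN0
      (le_iSup_of_le (Fin.natAdd (ν (Fin.castAdd s j₀)) i) le_rfl)))

lemma sum_psi {s : ℕ} (κ lam : Fin s → ℝ) (σ : ℝ) (N : Fin s → ℕ) :
    ∑ m ∈ Fintype.piFinset (fun j => Finset.range (N j + 1)),
      ∏ j, (((N j).choose (m j) : ℝ) * κ j ^ (N j - m j) * (σ * lam j) ^ m j)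
    = ∏ j, (κ j + σ * lam j) ^ N j := by
  rw [← Finset.prod_univ_sum (fun j => Finset.range (N j + 1))
    (fun j k => ((N j).choose k : ℝ) * κ j ^ (N j - k) * (σ * lam j) ^ k)]
  refine Finset.prod_congr rfl fun j _ => ?_
  rw [show κ j + σ * lam j = σ * lam j + κ j from add_comm _ _, add_pow]
  exact Finset.sum_congr rfl fun k hk => by ring

lemma ratio_sum_le {s : ℕ} (κ lam : Fin s → ℝ) (hκ : ∀ j, 0 < κ j)
    (hlam : ∀ j, 0 < lam j) (σ : ℝ) (hσ : 1 ≤ σ) (N : Fin s → ℕ) :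
    ∑ m ∈ Fintype.piFinset (fun j => Finset.range (N j + 1)),
      (if 1 ≤ ∑ j, m j then ratio κ lam σ N m else 0) ≤ σ⁻¹ := by
  have hσ0 : (0:ℝ) < σ := lt_of_lt_of_le one_pos hσ
  have hD := denom_pos κ lam hκ hlam σ hσ N
  have key : ∀ m ∈ Fintype.piFinset (fun j => Finset.range (N j + 1)),
      (if 1 ≤ ∑ j, m j then ratio κ lam σ N m else 0)
        ≤ σ⁻¹ * ((∏ j, (((N j).choose (m j) : ℝ) * κ j ^ (N j - m j) * (σ * lam j) ^ m j))
            / ∏ j, (κ j + σ * lam j) ^ N j) := by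
    intro m _
    have hψnn : 0 ≤ ∏ j, (((N j).choose (m j) : ℝ) * κ j ^ (N j - m j) * (σ * lam j) ^ m j) :=
      Finset.prod_nonneg fun j _ => mul_nonneg (mul_nonneg (Nat.cast_nonneg _)
        (pow_nonneg (hκ j).le _)) (pow_nonneg (mul_pos hσ0 (hlam j)).le _)
    split_ifs with h
    · have hψ : (∏ j, (((N j).choose (m j) : ℝ) * κ j ^ (N j - m j) * (σ * lam j) ^ m j))
          = σ ^ (∑ j, m j) *
            ∏ j, (((N j).choose (m j) : ℝ) * κ j ^ (N j - m j) * lam j ^ m j) := by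
        rw [← Finset.prod_pow_eq_pow_sum, ← Finset.prod_mul_distrib]
        exact Finset.prod_congr rfl fun j _ => by rw [mul_pow]; ring
      have hP : 0 ≤ ∏ j, (((N j).choose (m j) : ℝ) * κ j ^ (N j - m j) * lam j ^ m j) :=
        Finset.prod_nonneg fun j _ => mul_nonneg (mul_nonneg (Nat.cast_nonneg _)
          (pow_nonneg (hκ j).le _)) (pow_nonneg (hlam j).le _)
      have hσle : σ ≤ σ ^ (∑ j, m j) := le_self_pow₀ hσ (by omega)
      rw [ratio, div_eq_mul_inv, div_eq_mul_inv, ← mul_assoc]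
      refine mul_le_mul_of_nonneg_right ?_ (inv_nonneg.2 hD.le)
      rw [hψ]
      have h1 : σ * (∏ j, (((N j).choose (m j) : ℝ) * κ j ^ (N j - m j) * lam j ^ m j))
          ≤ σ ^ (∑ j, m j) * ∏ j, (((N j).choose (m j) : ℝ) * κ j ^ (N j - m j) * lam j ^ m j) :=
        mul_le_mul_of_nonneg_right hσle hP
      have h3 := mul_le_mul_of_nonneg_left h1 (inv_nonneg.2 hσ0.le)
      rwa [← mul_assoc, inv_mul_cancel₀ hσ0.ne', one_mul] at h3
    · exact mul_nonneg (inv_nonneg.2 hσ0.le) (div_nonneg hψnn hD.le)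
  refine le_trans (Finset.sum_le_sum key) (le_of_eq ?_)
  rw [← Finset.mul_sum, ← Finset.sum_div, sum_psi, div_self hD.ne', mul_one]

/-- The summand of the kernel norm. -/
noncomputable def Tfun [Fintype X] [DecidableEq X] {s : ℕ} (G : Finset X → ℝ)
    (κσ : Fin s → ℝ) (A : X → (Fin s → List X) → ℂ) (N : Fin s → ℕ) : ℝ≥0∞ :=
  if 1 ≤ ∑ j, N j then max (kerL G κσ A N) (kerR G κσ A N) else 0

noncomputable def Ffun [Fintype X] [DecidableEq X] {s : ℕ} (G : Finset X → ℝ)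
    (κ lam : Fin s → ℝ) (σ : ℝ) (A : X → (Fin s → List X) → ℂ)
    (p : (Fin s → ℕ) × (Fin s → ℕ)) : ℝ≥0∞ :=
  (if (∀ j, p.2 j ≤ p.1 j) ∧ 1 ≤ ∑ j, p.2 j then
      ENNReal.ofReal (ratio κ lam σ p.1 p.2) else 0) *
    Tfun G (fun j => κ j + σ * lam j) A p.1

def emap {s : ℕ} (ν : Fin (s + s) → ℕ) : (Fin s → ℕ) × (Fin s → ℕ) :=
  (fun j => ν (Fin.castAdd s j) + ν (Fin.natAdd s j), fun j => ν (Fin.natAdd s j))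

lemma emap_injective {s : ℕ} : Function.Injective (emap (s := s)) := by
  intro ν ν' hh
  have h1 := congrArg Prod.fst hh
  have h2 := congrArg Prod.snd hh
  simp only [emap] at h1 h2
  funext j
  induction j using Fin.addCases with
  | left j₀ =>
    have a1 := congrFun h1 j₀
    have a2 := congrFun h2 j₀
    omega
  | right j₀ => exact congrFun h2 j₀

end DeltaAux

/-- Lemma III.6(b): `⦀δA⦀_{w_δ} ≤ σ^{−1} ⦀A⦀_{w_σ}`. -/
theorem statement4 {X : Type*} [Fintype X] [DecidableEq X] [Nonempty X] {s : ℕ}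
    (G : Finset X → ℝ)
    (hG1 : ∀ S : Finset X, 1 ≤ G S)
    (hGsing : ∀ S : Finset X, S.card ≤ 1 → G S = 1)
    (hGmono : ∀ S T : Finset X, S ⊆ T → G S ≤ G T)
    (hGmul : ∀ S T : Finset X, (S ∩ T).Nonempty → G (S ∪ T) ≤ G S * G T)
    (κ lam : Fin s → ℝ) (hκ : ∀ j, 0 < κ j) (hlam : ∀ j, 0 < lam j)
    (σ : ℝ) (hσ : 1 ≤ σ)
    (A : X → (Fin s → List X) → ℂ) (hA : IsKernel A)
    (hAsymm : ∀ x, IsSymm (A x))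
    (hfin : kerNorm G (fun j => κ j + σ * lam j) A < ⊤) :
    kerNorm G (Fin.append κ lam) (deltaKer A)
      ≤ ENNReal.ofReal σ⁻¹ * kerNorm G (fun j => κ j + σ * lam j) A := by
  classical
  have hκσ : ∀ N : Fin s → ℕ,
      (if 1 ≤ ∑ j, N j then
        max (kerL G (fun j => κ j + σ * lam j) A N) (kerR G (fun j => κ j + σ * lam j) A N)
      else 0) = Tfun G (fun j => κ j + σ * lam j) A N := fun N => rfl
  have hterm : ∀ ν : Fin (s + s) → ℕ,
      (if 1 ≤ ∑ j, ν j then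
        max (kerL G (Fin.append κ lam) (deltaKer A) ν)
          (kerR G (Fin.append κ lam) (deltaKer A) ν)
      else 0) ≤ Ffun G κ lam σ A (emap ν) := by
    intro ν
    by_cases hm : 1 ≤ ∑ j : Fin s, ν (Fin.natAdd s j)
    · have hν : 1 ≤ ∑ j, ν j := by
        rw [Fin.sum_univ_add (f := ν)]
        omega
      have hNs : 1 ≤ ∑ j : Fin s, (ν (Fin.castAdd s j) + ν (Fin.natAdd s j)) :=
        le_trans hm (Finset.sum_le_sum fun j _ => Nat.le_add_left _ _)
      rw [if_pos hν]
      simp only [Ffun, Tfun]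
      rw [if_pos (show (∀ j, (emap ν).2 j ≤ (emap ν).1 j) ∧ 1 ≤ ∑ j, (emap ν).2 j from ⟨fun j => Nat.le_add_left _ _, hm⟩), if_pos (show 1 ≤ ∑ j, (emap ν).1 j from hNs)]
      refine max_le ?_ ?_
      · exact (kerL_delta_le G κ lam hκ hlam σ hσ A ν hm).trans
          (mul_le_mul_right (le_max_left _ _) _)
      · exact (kerR_delta_le G κ lam hκ hlam σ hσ A ν hm).trans
          (mul_le_mul_right (le_max_right _ _) _)
    · refine le_trans (le_of_eq ?_) zero_le
      split_ifs with h
      · rw [kerL_delta_zero G κ lam A ν hm, kerR_delta_zero G κ lam A ν hm]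
        simp
      · rfl
  have hsupp : Function.support (Ffun G κ lam σ A) ⊆ Set.range (emap (s := s)) := by
    intro p hp
    have hcond : (∀ j, p.2 j ≤ p.1 j) ∧ 1 ≤ ∑ j, p.2 j := by
      by_contra hc
      apply hp
      rw [Ffun, if_neg hc, zero_mul]
    refine ⟨Fin.append (fun j => p.1 j - p.2 j) p.2, ?_⟩
    rw [emap]
    have hfst : (fun j => Fin.append (fun j => p.1 j - p.2 j) p.2 (Fin.castAdd s j)
        + Fin.append (fun j => p.1 j - p.2 j) p.2 (Fin.natAdd s j)) = p.1 := by
      funext j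
      rw [Fin.append_left, Fin.append_right]
      have := hcond.1 j
      omega
    have hsnd : (fun j => Fin.append (fun j => p.1 j - p.2 j) p.2 (Fin.natAdd s j)) = p.2 := by
      funext j
      rw [Fin.append_right]
    rw [hfst, hsnd]
  calc kerNorm G (Fin.append κ lam) (deltaKer A)
      ≤ ∑' ν : Fin (s + s) → ℕ, Ffun G κ lam σ A (emap ν) := ENNReal.tsum_le_tsum hterm
    _ = ∑' p : (Fin s → ℕ) × (Fin s → ℕ), Ffun G κ lam σ A p :=
        emap_injective.tsum_eq hsupp
    _ = ∑' N : Fin s → ℕ, ∑' m : Fin s → ℕ, Ffun G κ lam σ A (N, m) := ENNReal.tsum_prod'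
    _ ≤ ∑' N : Fin s → ℕ, ENNReal.ofReal σ⁻¹ * Tfun G (fun j => κ j + σ * lam j) A N := by
        refine ENNReal.tsum_le_tsum fun N => ?_
        have hsum : ∑' m : Fin s → ℕ, Ffun G κ lam σ A (N, m)
            = (∑' m : Fin s → ℕ, (if (∀ j, m j ≤ N j) ∧ 1 ≤ ∑ j, m j then
                ENNReal.ofReal (ratio κ lam σ N m) else 0)) *
              Tfun G (fun j => κ j + σ * lam j) A N := by
          simp only [Ffun]
          exact ENNReal.tsum_mul_right
        rw [hsum]
        refine mul_le_mul_left ?_ _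
        rw [tsum_eq_sum (s := Fintype.piFinset fun j => Finset.range (N j + 1))
          (fun m hmem => if_neg (fun hc => hmem (by
            rw [Fintype.mem_piFinset]
            exact fun j => Finset.mem_range.2 (Nat.lt_succ_of_le (hc.1 j)))))]
        have heq : ∀ m ∈ Fintype.piFinset fun j => Finset.range (N j + 1),
            (if (∀ j, m j ≤ N j) ∧ 1 ≤ ∑ j, m j then
              ENNReal.ofReal (ratio κ lam σ N m) else 0)
            = ENNReal.ofReal (if 1 ≤ ∑ j, m j then ratio κ lam σ N m else 0) := by
          intro m hmem
          have hj : ∀ j, m j ≤ N j := fun j =>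
            Nat.lt_succ_iff.1 (Finset.mem_range.1 ((Fintype.mem_piFinset).1 hmem j))
          by_cases h : 1 ≤ ∑ j, m j
          · rw [if_pos ⟨hj, h⟩, if_pos h]
          · rw [if_neg (fun hc => h hc.2), if_neg h, ENNReal.ofReal_zero]
        rw [Finset.sum_congr rfl heq, ← ENNReal.ofReal_sum_of_nonneg (fun m _ => by
          split_ifs with h
          · exact ratio_nonneg κ lam hκ hlam σ hσ N m
          · exact le_rfl)]
        exact ENNReal.ofReal_le_ofReal (ratio_sum_le κ lam hκ hlam σ hσ N)
    _ = ENNReal.ofReal σ⁻¹ * kerNorm G (fun j => κ j + σ * lam j) A := ENNReal.tsum_mul_left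


end BFKT
end

section
/- Let n ≥ 1 and for each 1 ≤ ℓ ≤ n let (X_ℓ, μ_ℓ) be a σ-finite measure space, f_ℓ : X_ℓ → ℂ measurable, and p_ℓ ∈ (0,∞] with Σ_{ℓ=1}^n 1/p_ℓ = 1. Let K : X₁×⋯×X_n → ℂ be measurable with finite L¹–L^∞ norm ‖K‖_{L¹–L^∞} = max_{1≤ℓ≤n} ess sup_{x_ℓ∈X_ℓ} ∫ |K(x₁,…,x_n)| Π_{m≠ℓ} dμ_m(x_m). Then ∫_{X₁×⋯×X_n} |K(x₁,…,x_n)| Π_{ℓ=1}^n |f_ℓ(x_ℓ)| Π_{ℓ=1}^n dμ_ℓ(x_ℓ) ≤ ‖K‖_{L¹–L^∞} · Π_{ℓ=1}^n ‖f_ℓ‖_{L^{p_ℓ}(μ_ℓ)}; in particular |∫ K·Π_ℓ f_ℓ dμ₁⋯dμ_n| ≤ ‖K‖_{L¹–L^∞} · Π_{ℓ=1}^n ‖f_ℓ‖_{L^{p_ℓ}(μ_ℓ)}. -/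
open scoped BigOperators ENNReal
open MeasureTheory

/-- Reconstruct a point of the product from its `ℓ`-th coordinate and the remaining
coordinates. -/
def recomb {n : ℕ} {Xs : Fin n → Type*} (ℓ : Fin n) (x : Xs ℓ)
    (y : ∀ m : {m : Fin n // m ≠ ℓ}, Xs m.1) (m : Fin n) : Xs m :=
  if h : m = ℓ then cast (congrArg Xs h).symm x else y ⟨m, h⟩

/-- The mixed `L¹`–`L^∞` norm of a kernel `K` on a product of measure spaces:
the max over `ℓ` of the essential sup over the `ℓ`-th variable of the integral of `|K|`
over all the other variables. -/
noncomputable def KnormL1Linf {n : ℕ} {Xs : Fin n → Type*}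
    [∀ ℓ, MeasurableSpace (Xs ℓ)] (μ : ∀ ℓ, Measure (Xs ℓ))
    (K : (∀ ℓ, Xs ℓ) → ℂ) : ℝ≥0∞ :=
  ⨆ ℓ, essSup
    (fun x : Xs ℓ =>
      ∫⁻ y, ENNReal.ofReal ‖K (recomb ℓ x y)‖
        ∂(Measure.pi fun m : {m : Fin n // m ≠ ℓ} => μ m.1))
    (μ ℓ)

section Aux

variable {n : ℕ} {Xs : Fin n → Type*} [∀ ℓ, MeasurableSpace (Xs ℓ)]

/-- The measurable equivalence splitting off the `ℓ`-th coordinate. -/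
noncomputable def splitEquiv (ℓ : Fin n) :
    (∀ m, Xs m) ≃ᵐ (Xs ℓ × ∀ m : {m : Fin n // m ≠ ℓ}, Xs m.1) :=
  (MeasurableEquiv.piEquivPiSubtypeProd Xs (· = ℓ)).trans
    ((MeasurableEquiv.piUnique (fun m : {m : Fin n // m = ℓ} => Xs m.1)).prodCongr
      (MeasurableEquiv.refl _))

theorem splitEquiv_symm_apply (ℓ : Fin n) (x : Xs ℓ)
    (y : ∀ m : {m : Fin n // m ≠ ℓ}, Xs m.1) :
    (splitEquiv ℓ).symm (x, y) = recomb ℓ x y := by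
  have : splitEquiv ℓ (recomb ℓ x y) = (x, y) := by
    have h1 : recomb ℓ x y ℓ = x := by simp [recomb]
    have h2 : (fun m : {m : Fin n // m ≠ ℓ} => recomb ℓ x y m.1) = y := by
      funext m; simp [recomb, m.2]
    show (recomb ℓ x y ℓ, fun m : {m : Fin n // m ≠ ℓ} => recomb ℓ x y m.1) = (x, y)
    rw [h1, h2]
  rw [← this, MeasurableEquiv.symm_apply_apply]

variable (μ : ∀ ℓ, Measure (Xs ℓ)) [∀ ℓ, SigmaFinite (μ ℓ)]

theorem measurePreserving_splitEquiv (ℓ : Fin n) :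
    MeasurePreserving (splitEquiv ℓ) (Measure.pi μ)
      ((μ ℓ).prod (Measure.pi fun m : {m : Fin n // m ≠ ℓ} => μ m.1)) := by
  refine (MeasureTheory.measurePreserving_piEquivPiSubtypeProd μ (· = ℓ)).trans ?_
  convert (MeasureTheory.measurePreserving_piUnique
    (fun m : {m : Fin n // m = ℓ} => μ m.1)).prod
      (MeasurePreserving.id (Measure.pi fun m : {m : Fin n // m ≠ ℓ} => μ m.1)) using 2
  case e'_6 => congr 1; exact Subsingleton.elim _ _
  all_goals rfl

/-- Key single-variable estimate. -/
theorem lemA (ℓ : Fin n) (K : (∀ m, Xs m) → ℂ) (hK : Measurable K)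
    (c : Xs ℓ → ℝ≥0∞) (hc : Measurable c) :
    ∫⁻ z, ENNReal.ofReal ‖K z‖ * c (z ℓ) ∂(Measure.pi μ)
      ≤ essSup (fun x : Xs ℓ =>
          ∫⁻ y, ENNReal.ofReal ‖K (recomb ℓ x y)‖
            ∂(Measure.pi fun m : {m : Fin n // m ≠ ℓ} => μ m.1)) (μ ℓ)
        * ∫⁻ x, c x ∂(μ ℓ) := by
  set ν := Measure.pi fun m : {m : Fin n // m ≠ ℓ} => μ m.1
  set H := fun x : Xs ℓ => ∫⁻ y, ENNReal.ofReal ‖K (recomb ℓ x y)‖ ∂ν with hH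
  set G := fun z => ENNReal.ofReal ‖K z‖ * c (z ℓ) with hG
  have hGm : Measurable G := by
    apply Measurable.mul
    · exact hK.norm.ennreal_ofReal
    · exact hc.comp (measurable_pi_apply ℓ)
  have step1 : ∫⁻ z, G z ∂(Measure.pi μ)
      = ∫⁻ w, G ((splitEquiv ℓ).symm w) ∂((μ ℓ).prod ν) :=
    (((measurePreserving_splitEquiv μ ℓ).symm).lintegral_comp hGm).symm
  rw [step1]
  have step2 : ∫⁻ w, G ((splitEquiv ℓ).symm w) ∂((μ ℓ).prod ν)
      = ∫⁻ x, c x * H x ∂(μ ℓ) := by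
    rw [MeasureTheory.lintegral_prod (fun w => G ((splitEquiv ℓ).symm w))
      ((hGm.comp (splitEquiv ℓ).symm.measurable).aemeasurable)]
    congr 1; funext x
    have hpt : ∀ y, G ((splitEquiv ℓ).symm (x, y))
        = ENNReal.ofReal ‖K (recomb ℓ x y)‖ * c x := by
      intro y
      rw [splitEquiv_symm_apply]
      have : recomb ℓ x y ℓ = x := by simp [recomb]
      rw [hG]; simp only [this]
    simp_rw [hpt]
    have hrm : Measurable (fun y => ENNReal.ofReal ‖K (recomb ℓ x y)‖) := by
      have he : (fun y : ∀ m : {m : Fin n // m ≠ ℓ}, Xs m.1 => recomb ℓ x y)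
          = fun y => (splitEquiv ℓ).symm (x, y) := by
        funext y; rw [splitEquiv_symm_apply]
      have : Measurable (fun y : ∀ m : {m : Fin n // m ≠ ℓ}, Xs m.1 => recomb ℓ x y) := by
        rw [he]
        exact (splitEquiv ℓ).symm.measurable.comp (measurable_const.prodMk measurable_id)
      exact (hK.norm.ennreal_ofReal).comp this
    rw [lintegral_mul_const'' _ hrm.aemeasurable, mul_comm]
  rw [step2]
  calc ∫⁻ x, c x * H x ∂(μ ℓ)
      ≤ ∫⁻ x, c x * essSup H (μ ℓ) ∂(μ ℓ) := by
        refine lintegral_mono_ae ?_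
        filter_upwards [ae_le_essSup (f := H) (μ := μ ℓ)] with x hx
        exact mul_le_mul_right hx _
    _ = essSup H (μ ℓ) * ∫⁻ x, c x ∂(μ ℓ) := by
        rw [lintegral_mul_const'' _ hc.aemeasurable, mul_comm]

/-- Null sets in the `ℓ`-th coordinate pull back to null sets of the product. -/
theorem ae_pi_of_ae_coord (ℓ : Fin n) {P : Xs ℓ → Prop} (h : ∀ᵐ x ∂(μ ℓ), P x) :
    ∀ᵐ z ∂(Measure.pi μ), P (z ℓ) := by
  have h2 : ∀ᵐ w : Xs ℓ × ∀ m : {m : Fin n // m ≠ ℓ}, Xs m.1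
      ∂((μ ℓ).prod (Measure.pi fun m : {m : Fin n // m ≠ ℓ} => μ m.1)), P w.1 :=
    Measure.quasiMeasurePreserving_fst.ae h
  have h3 := (measurePreserving_splitEquiv μ ℓ).quasiMeasurePreserving.ae h2
  exact h3

end Aux

/-- Product of rpow's of a fixed base. -/
theorem prod_rpow_sum_eq {ι : Type*} (a : ℝ≥0∞) (ha : a ≠ ⊤) (s : Finset ι) (hs : s.Nonempty)
    (q : ι → ℝ) (hq : ∀ i ∈ s, 0 < q i) :
    ∏ i ∈ s, a ^ q i = a ^ (∑ i ∈ s, q i) := by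
  rcases eq_or_ne a 0 with rfl | ha0
  · rw [Finset.prod_eq_zero hs.choose_spec (ENNReal.zero_rpow_of_pos (hq _ hs.choose_spec)),
      ENNReal.zero_rpow_of_pos (Finset.sum_pos hq hs)]
  · classical
    induction s using Finset.induction with
    | empty => simp
    | @insert i s hi ih =>
      rcases s.eq_empty_or_nonempty with rfl | hsne
      · simp
      · rw [Finset.prod_insert hi, Finset.sum_insert hi,
          ih hsne (fun j hj => hq j (Finset.mem_insert_of_mem hj)),
          ENNReal.rpow_add _ _ ha0 ha]

/-- Lemma III.A.1 (a generalisation of Young's inequality):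
`∫ |K| Π_ℓ |f_ℓ| ≤ ‖K‖_{L¹–L^∞} Π_ℓ ‖f_ℓ‖_{L^{p_ℓ}}` when `Σ_ℓ 1/p_ℓ = 1`;
in particular `|∫ K Π_ℓ f_ℓ| ≤ ‖K‖_{L¹–L^∞} Π_ℓ ‖f_ℓ‖_{L^{p_ℓ}}`. -/
theorem statement17 {n : ℕ} (hn : 1 ≤ n) {Xs : Fin n → Type*}
    [∀ ℓ, MeasurableSpace (Xs ℓ)] (μ : ∀ ℓ, Measure (Xs ℓ))
    [∀ ℓ, SigmaFinite (μ ℓ)]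
    (f : ∀ ℓ, Xs ℓ → ℂ) (hf : ∀ ℓ, Measurable (f ℓ))
    (K : (∀ ℓ, Xs ℓ) → ℂ) (hK : Measurable K)
    (hKfin : KnormL1Linf μ K < ⊤)
    (p : Fin n → ℝ≥0∞) (hp : ∀ ℓ, 0 < p ℓ)
    (hsum : ∑ ℓ, 1 / p ℓ = 1) :
    (∫⁻ z, ENNReal.ofReal ‖K z‖
          * ∏ ℓ, ENNReal.ofReal ‖f ℓ (z ℓ)‖ ∂(Measure.pi μ))
        ≤ KnormL1Linf μ K * ∏ ℓ, eLpNorm (f ℓ) (p ℓ) (μ ℓ)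
      ∧ ENNReal.ofReal ‖∫ z, K z * ∏ ℓ, f ℓ (z ℓ) ∂(Measure.pi μ)‖
        ≤ KnormL1Linf μ K * ∏ ℓ, eLpNorm (f ℓ) (p ℓ) (μ ℓ) := by
  classical
  have habs : ∀ v : ℂ, ENNReal.ofReal ‖v‖ = (‖v‖₊ : ℝ≥0∞) := fun v => by
    rw [ofReal_norm]; rfl
  set Kn := KnormL1Linf μ K with hKn
  set S : Finset (Fin n) := Finset.univ.filter (fun ℓ => p ℓ ≠ ∞) with hSdef
  have hmemS : ∀ ℓ, ℓ ∈ S ↔ p ℓ ≠ ∞ := fun ℓ => by simp [hSdef]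
  set q : Fin n → ℝ := fun ℓ => ((p ℓ).toReal)⁻¹ with hqdef
  have hpt : ∀ ℓ ∈ S, 0 < (p ℓ).toReal :=
    fun ℓ hl => ENNReal.toReal_pos (hp ℓ).ne' ((hmemS ℓ).1 hl)
  have hq0 : ∀ ℓ ∈ S, 0 < q ℓ := fun ℓ hl => inv_pos.2 (hpt ℓ hl)
  have hqsum : ∑ ℓ ∈ S, q ℓ = 1 := by
    have h1 : ∑ ℓ ∈ S, 1 / p ℓ = 1 := by
      have he : ∑ ℓ ∈ S, 1 / p ℓ = ∑ ℓ, 1 / p ℓ := by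
        apply Finset.sum_subset (Finset.subset_univ S)
        intro ℓ _ hl
        rw [hmemS] at hl; push_neg at hl
        simp [hl]
      rw [he, hsum]
    have h2 : ∀ ℓ ∈ S, 1 / p ℓ ≠ ∞ := by
      intro ℓ _
      simp [ENNReal.div_eq_top, (hp ℓ).ne']
    have h3 := congrArg ENNReal.toReal h1
    rw [ENNReal.toReal_sum h2] at h3
    simpa [one_div, ENNReal.toReal_inv, hqdef] using h3
  have hSne : S.Nonempty := by
    rcases S.eq_empty_or_nonempty with h | h
    · rw [h, Finset.sum_empty] at hqsum; norm_num at hqsum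
    · exact h
  set M : Fin n → ℝ≥0∞ := fun ℓ => eLpNorm (f ℓ) (p ℓ) (μ ℓ) with hMdef
  set g : Fin n → (∀ m, Xs m) → ℝ≥0∞ :=
    fun ℓ z => (‖K z‖₊ : ℝ≥0∞) * (‖f ℓ (z ℓ)‖₊ : ℝ≥0∞) ^ (p ℓ).toReal with hgdef
  have hgm : ∀ ℓ, Measurable (g ℓ) := fun ℓ =>
    hK.enorm.mul (((hf ℓ).comp (measurable_pi_apply ℓ)).enorm.pow_const _)
  have main : (∫⁻ z, ENNReal.ofReal ‖K z‖
      * ∏ ℓ, ENNReal.ofReal ‖f ℓ (z ℓ)‖ ∂(Measure.pi μ)) ≤ Kn * ∏ ℓ, M ℓ := by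
    simp_rw [habs]
    -- a.e. bounds for the L^∞ indices
    have hb : ∀ᵐ z ∂(Measure.pi μ), ∀ ℓ ∈ Sᶜ, (‖f ℓ (z ℓ)‖₊ : ℝ≥0∞) ≤ M ℓ := by
      rw [Filter.eventually_all_finset]
      intro ℓ hl
      have hpl : p ℓ = ∞ := by
        rw [Finset.mem_compl, hmemS] at hl; push_neg at hl; exact hl
      have h1 : ∀ᵐ x ∂(μ ℓ), (‖f ℓ x‖₊ : ℝ≥0∞) ≤ M ℓ := by
        rw [hMdef]; simp only [hpl, eLpNorm_exponent_top]
        exact enorm_ae_le_eLpNormEssSup (f ℓ) (μ ℓ)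
      exact ae_pi_of_ae_coord μ ℓ h1
    -- pointwise inequality
    have hae : ∀ᵐ z ∂(Measure.pi μ),
        (‖K z‖₊ : ℝ≥0∞) * ∏ ℓ, (‖f ℓ (z ℓ)‖₊ : ℝ≥0∞)
          ≤ (∏ ℓ ∈ Sᶜ, M ℓ) * ∏ ℓ ∈ S, (g ℓ z) ^ q ℓ := by
      filter_upwards [hb] with z hz
      have key : (‖K z‖₊ : ℝ≥0∞) * ∏ ℓ ∈ S, (‖f ℓ (z ℓ)‖₊ : ℝ≥0∞)
          = ∏ ℓ ∈ S, (g ℓ z) ^ q ℓ := by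
        have : ∀ ℓ ∈ S, (g ℓ z) ^ q ℓ
            = (‖K z‖₊ : ℝ≥0∞) ^ q ℓ * (‖f ℓ (z ℓ)‖₊ : ℝ≥0∞) := by
          intro ℓ hl
          rw [hgdef]
          rw [ENNReal.mul_rpow_of_nonneg _ _ (hq0 ℓ hl).le, ← ENNReal.rpow_mul,
            mul_inv_cancel₀ (hpt ℓ hl).ne', ENNReal.rpow_one]
        rw [Finset.prod_congr rfl this, Finset.prod_mul_distrib,
          prod_rpow_sum_eq _ ENNReal.coe_ne_top S hSne q hq0, hqsum, ENNReal.rpow_one]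
      calc (‖K z‖₊ : ℝ≥0∞) * ∏ ℓ, (‖f ℓ (z ℓ)‖₊ : ℝ≥0∞)
          = (∏ ℓ ∈ Sᶜ, (‖f ℓ (z ℓ)‖₊ : ℝ≥0∞))
            * ((‖K z‖₊ : ℝ≥0∞) * ∏ ℓ ∈ S, (‖f ℓ (z ℓ)‖₊ : ℝ≥0∞)) := by
            rw [← Finset.prod_mul_prod_compl S]; ring
        _ ≤ (∏ ℓ ∈ Sᶜ, M ℓ) * ((‖K z‖₊ : ℝ≥0∞) * ∏ ℓ ∈ S, (‖f ℓ (z ℓ)‖₊ : ℝ≥0∞)) :=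
            mul_le_mul_left (Finset.prod_le_prod' hz) _
        _ = (∏ ℓ ∈ Sᶜ, M ℓ) * ∏ ℓ ∈ S, (g ℓ z) ^ q ℓ := by rw [key]
    -- single-variable bounds
    have lemA' : ∀ ℓ ∈ S, ∫⁻ z, g ℓ z ∂(Measure.pi μ)
        ≤ Kn * (∫⁻ x, (‖f ℓ x‖₊ : ℝ≥0∞) ^ (p ℓ).toReal ∂(μ ℓ)) := by
      intro ℓ hl
      have hc : Measurable fun x : Xs ℓ => (‖f ℓ x‖₊ : ℝ≥0∞) ^ (p ℓ).toReal :=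
        (hf ℓ).enorm.pow_const _
      have h1 := lemA μ ℓ K hK (fun x => (‖f ℓ x‖₊ : ℝ≥0∞) ^ (p ℓ).toReal) hc
      simp_rw [habs] at h1
      refine h1.trans (mul_le_mul_left ?_ _)
      rw [hKn]
      exact le_iSup_of_le ℓ (by simp_rw [habs]; exact le_rfl)
    -- eLpNorm identification
    have hMS : ∀ ℓ ∈ S, (∫⁻ x, (‖f ℓ x‖₊ : ℝ≥0∞) ^ (p ℓ).toReal ∂(μ ℓ)) ^ q ℓ = M ℓ := by
      intro ℓ hl
      simp only [hMdef]
      rw [eLpNorm_eq_lintegral_rpow_enorm_toReal (hp ℓ).ne' ((hmemS ℓ).1 hl), one_div]; rfl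
    -- put everything together
    calc ∫⁻ z, (‖K z‖₊ : ℝ≥0∞) * ∏ ℓ, (‖f ℓ (z ℓ)‖₊ : ℝ≥0∞) ∂(Measure.pi μ)
        ≤ ∫⁻ z, (∏ ℓ ∈ Sᶜ, M ℓ) * ∏ ℓ ∈ S, (g ℓ z) ^ q ℓ ∂(Measure.pi μ) :=
          lintegral_mono_ae hae
      _ = (∏ ℓ ∈ Sᶜ, M ℓ) * ∫⁻ z, ∏ ℓ ∈ S, (g ℓ z) ^ q ℓ ∂(Measure.pi μ) :=
          lintegral_const_mul _ (Finset.measurable_prod S fun ℓ _ => (hgm ℓ).pow_const _)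
      _ ≤ (∏ ℓ ∈ Sᶜ, M ℓ) * ∏ ℓ ∈ S, (∫⁻ z, g ℓ z ∂(Measure.pi μ)) ^ q ℓ :=
          mul_le_mul_right
            (ENNReal.lintegral_prod_norm_pow_le S (fun ℓ _ => (hgm ℓ).aemeasurable) hqsum
              (fun ℓ hl => (hq0 ℓ hl).le)) _
      _ ≤ (∏ ℓ ∈ Sᶜ, M ℓ) * ∏ ℓ ∈ S,
            (Kn * ∫⁻ x, (‖f ℓ x‖₊ : ℝ≥0∞) ^ (p ℓ).toReal ∂(μ ℓ)) ^ q ℓ := by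
          refine mul_le_mul_right (Finset.prod_le_prod' fun ℓ hl => ?_) _
          exact ENNReal.rpow_le_rpow (lemA' ℓ hl) (hq0 ℓ hl).le
      _ = (∏ ℓ ∈ Sᶜ, M ℓ) * (Kn * ∏ ℓ ∈ S, M ℓ) := by
          congr 1
          have : ∀ ℓ ∈ S, (Kn * ∫⁻ x, (‖f ℓ x‖₊ : ℝ≥0∞) ^ (p ℓ).toReal ∂(μ ℓ)) ^ q ℓ
              = Kn ^ q ℓ * M ℓ := by
            intro ℓ hl
            rw [ENNReal.mul_rpow_of_nonneg _ _ (hq0 ℓ hl).le, hMS ℓ hl]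
          rw [Finset.prod_congr rfl this, Finset.prod_mul_distrib,
            prod_rpow_sum_eq _ hKfin.ne S hSne q hq0, hqsum, ENNReal.rpow_one]
      _ = Kn * ∏ ℓ, M ℓ := by
          rw [← Finset.prod_mul_prod_compl S M]; ring
  refine ⟨main, ?_⟩
  calc ENNReal.ofReal ‖∫ z, K z * ∏ ℓ, f ℓ (z ℓ) ∂(Measure.pi μ)‖
      = (‖∫ z, K z * ∏ ℓ, f ℓ (z ℓ) ∂(Measure.pi μ)‖₊ : ℝ≥0∞) := by rw [ofReal_norm]; rfl
    _ ≤ ∫⁻ z, (‖K z * ∏ ℓ, f ℓ (z ℓ)‖₊ : ℝ≥0∞) ∂(Measure.pi μ) :=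
        enorm_integral_le_lintegral_enorm _
    _ = ∫⁻ z, ENNReal.ofReal ‖K z‖
          * ∏ ℓ, ENNReal.ofReal ‖f ℓ (z ℓ)‖ ∂(Measure.pi μ) := by
        congr 1; funext z
        simp_rw [habs]
        rw [nnnorm_mul, nnnorm_prod]
        push_cast
        rfl
    _ ≤ Kn * ∏ ℓ, eLpNorm (f ℓ) (p ℓ) (μ ℓ) := main
end
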